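/- arXiv:1602.04253 — 4 statements merged into one kernel-verified Lean document; each statement's English description precedes it below -/
import Mathlib

section
/- Let f ∈ k[x_1,…,x_N] ⊆ L[x_1,…,x_N] be a polynomial with coefficients in k. If there exist c ∈ (0,1) and B ≥ A such that |f(w^{1/q^{n_i}})| ≤ c for all i ≥ B, then f(w^{1/q^{n_i}}) = 0 for all but finitely many i; in particular f vanishes identically on Z, i.e. f ∈ I(Z). -/
open MvPolynomial

/-- The inverse of the `q^n`-power Frobenius (`q = p^s`) on a perfect ring of characteristic
`p`: the unique `q^n`-th root. -/
noncomputable def qPowRoot (p s : ℕ) (L : Type*) [CommSemiring L] [ExpChar L p]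
    [PerfectRing L p] (n : ℕ) (z : L) : L :=
  (⇑(frobeniusEquiv L p).symm)^[s * n] z

/-- The coordinatewise `q^n`-th root `w^{1/q^n}` of a tuple `w`. -/
noncomputable def wRoot (p s : ℕ) {L : Type*} [CommSemiring L] [ExpChar L p] [PerfectRing L p]
    {N : ℕ} (w : Fin N → L) (n : ℕ) : Fin N → L :=
  fun j => qPowRoot p s L n (w j)

/-- The coordinatewise `q`-power Frobenius `Φ^s` (`q = p^s`). -/
def qPowMap (p s : ℕ) {L : Type*} [Monoid L] {N : ℕ} (x : Fin N → L) : Fin N → L :=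
  fun j => x j ^ p ^ s

/-- `w^{1/q^i}` for `i : ℤ`, where for negative `i` one sets `w^{1/q^i} := w^{q^{-i}}`. -/
noncomputable def wRootZ (p s : ℕ) {L : Type*} [CommSemiring L] [ExpChar L p] [PerfectRing L p]
    {N : ℕ} (w : Fin N → L) (i : ℤ) : Fin N → L :=
  if 0 ≤ i then wRoot p s w i.toNat else fun j => w j ^ (p ^ s) ^ (-i).toNat

private lemma pow_pow_fix {K : Type*} [Monoid K] {a : K} {q : ℕ} (ha : a ^ q = a) :
    ∀ t : ℕ, a ^ q ^ t = a
  | 0 => by rw [pow_zero, pow_one]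
  | t + 1 => by rw [pow_succ, pow_mul, pow_pow_fix ha t]; exact ha

private lemma pow_fix_of_dvd {K : Type*} [Monoid K] {a : K} (p : ℕ) {m M : ℕ}
    (ha : a ^ p ^ m = a) (h : m ∣ M) : a ^ p ^ M = a := by
  obtain ⟨t, rfl⟩ := h
  rw [pow_mul]
  exact pow_pow_fix ha t

private lemma exists_frob_fix (p : ℕ) [Fact p.Prime] (a : AlgebraicClosure (ZMod p)) :
    ∃ M : ℕ, 1 ≤ M ∧ a ^ p ^ M = a := by
  have hint : IsIntegral (ZMod p) a := Algebra.IsIntegral.isIntegral a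
  haveI : FiniteDimensional (ZMod p) (IntermediateField.adjoin (ZMod p) {a}) :=
    IntermediateField.adjoin.finiteDimensional hint
  haveI : Finite (IntermediateField.adjoin (ZMod p) {a}) := Module.finite_of_finite (ZMod p)
  haveI : Fintype (IntermediateField.adjoin (ZMod p) {a}) := Fintype.ofFinite _
  haveI : CharP (IntermediateField.adjoin (ZMod p) {a}) p :=
    charP_of_injective_algebraMap
      (algebraMap (ZMod p) (IntermediateField.adjoin (ZMod p) {a})).injective p
  obtain ⟨n, -, hcard⟩ := FiniteField.card (IntermediateField.adjoin (ZMod p) {a}) p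
  set x : IntermediateField.adjoin (ZMod p) {a} :=
    ⟨a, IntermediateField.mem_adjoin_simple_self (ZMod p) a⟩ with hx
  refine ⟨n, n.one_le, ?_⟩
  have h1 : x ^ p ^ (n : ℕ) = x := by
    rw [← hcard]; exact FiniteField.pow_card x
  have h2 := congrArg (fun y : IntermediateField.adjoin (ZMod p) {a} =>
    (y : AlgebraicClosure (ZMod p))) h1
  simpa [hx] using h2

private lemma iterate_symm_pow (p : ℕ) {L : Type*} [CommSemiring L] [ExpChar L p]
    [PerfectRing L p] : ∀ (e : ℕ) (z : L), ((⇑(frobeniusEquiv L p).symm)^[e] z) ^ p ^ e = z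
  | 0, z => by simp
  | e + 1, z => by
    rw [Function.iterate_succ_apply', pow_succ', pow_mul, frobeniusEquiv_symm_pow_p]
    exact iterate_symm_pow p e z

private lemma wRoot_pow (p s : ℕ) {L : Type*} [CommSemiring L] [ExpChar L p] [PerfectRing L p]
    {N : ℕ} (w : Fin N → L) {n n' : ℕ} (h : n ≤ n') (j : Fin N) :
    wRoot p s w n' j ^ p ^ (s * (n' - n)) = wRoot p s w n j := by
  unfold wRoot qPowRoot
  have hsplit : s * n' = s * (n' - n) + s * n := by
    rw [← Nat.mul_add]; congr 1; omega
  rw [hsplit, Function.iterate_add_apply, iterate_symm_pow]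

/-- **Lemma 5.1.** Let `Z` be the Zariski closure of the tails of `{w^{1/q^{n_i}}}` and let
`f` be a polynomial with coefficients in `k = 𝔽_p-bar`. If `|f(w^{1/q^{n_i}})| ≤ c < 1` for all
`i ≥ B`, then `f(w^{1/q^{n_i}}) = 0` for all large `i`; in particular `f` vanishes on `Z`. -/
theorem small_on_roots_implies_vanishes_on_closure
    (p : ℕ) [Fact p.Prime] (s : ℕ) (hs : 1 ≤ s) {N : ℕ}
    (L : Type*) [Field L] [IsAlgClosed L] [CharP L p] [ExpChar L p] [PerfectRing L p]
    (v : AbsoluteValue L ℝ) (hna : ∀ x y : L, v (x + y) ≤ max (v x) (v y))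
    (ι : AlgebraicClosure (ZMod p) →+* L)
    (w : Fin N → L) (hw : ∀ j, v (w j) ≤ 1)
    (nseq : ℕ → ℕ) (hmono : StrictMono nseq)
    (A : ℕ) (Z : Set (Fin N → L))
    (hZ : ∀ n, A ≤ n → Z = {x | ∀ f : MvPolynomial (Fin N) L,
      (∀ i, n ≤ i → MvPolynomial.eval (wRoot p s w (nseq i)) f = 0) →
        MvPolynomial.eval x f = 0})
    (f : MvPolynomial (Fin N) (AlgebraicClosure (ZMod p)))
    (c : ℝ) (hc0 : 0 < c) (hc1 : c < 1) (B : ℕ) (hAB : A ≤ B)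
    (hbound : ∀ i, B ≤ i →
      v (MvPolynomial.eval (wRoot p s w (nseq i)) (MvPolynomial.map ι f)) ≤ c) :
    (∃ C, ∀ i, C ≤ i →
        MvPolynomial.eval (wRoot p s w (nseq i)) (MvPolynomial.map ι f) = 0) ∧
      ∀ x ∈ Z, MvPolynomial.eval x (MvPolynomial.map ι f) = 0 := by
  have hp : p.Prime := Fact.out
  -- a uniform `M` fixing all coefficients of `f` under `Frob^M`
  obtain ⟨M, hM1, hMfix⟩ : ∃ M, 1 ≤ M ∧ ∀ m, f.coeff m ^ p ^ M = f.coeff m := by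
    choose g hg1 hg2 using exists_frob_fix p
    refine ⟨∏ m ∈ f.support, g (f.coeff m), Finset.one_le_prod' fun m _ => hg1 _, fun m => ?_⟩
    by_cases hm : m ∈ f.support
    · exact pow_fix_of_dvd p (hg2 _) (Finset.dvd_prod_of_mem _ hm)
    · rw [MvPolynomial.notMem_support_iff.mp hm]
      exact zero_pow (pow_pos hp.pos _).ne'
  -- the key Frobenius identity between evaluation points
  have key : ∀ i i' : ℕ, i ≤ i' → M ∣ s * (nseq i' - nseq i) →
      (eval (wRoot p s w (nseq i')) (MvPolynomial.map ι f)) ^ p ^ (s * (nseq i' - nseq i))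
        = eval (wRoot p s w (nseq i)) (MvPolynomial.map ι f) := by
    intro i i' hii hdvd
    set e := s * (nseq i' - nseq i) with he
    set g : MvPolynomial (Fin N) L := MvPolynomial.map ι f with hg
    have hmapfix : MvPolynomial.map (iterateFrobenius L p e) g = g := by
      ext m
      rw [hg, coeff_map, coeff_map, iterateFrobenius_def, ← map_pow,
        pow_fix_of_dvd p (hMfix m) hdvd]
    have hcomp : iterateFrobenius L p e (eval (wRoot p s w (nseq i')) g)
        = eval (⇑(iterateFrobenius L p e) ∘ (wRoot p s w (nseq i')))
            (MvPolynomial.map (iterateFrobenius L p e) g) := by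
      have h := eval₂_comp_left (iterateFrobenius L p e) (RingHom.id L)
        (wRoot p s w (nseq i')) g
      simpa only [eval₂_id, RingHom.comp_id, ← eval_map, MvPolynomial.map_id] using h
    have hpt : ⇑(iterateFrobenius L p e) ∘ (wRoot p s w (nseq i')) = wRoot p s w (nseq i) := by
      funext j
      simp only [Function.comp_apply, iterateFrobenius_def]
      exact wRoot_pow p s w (hmono.monotone hii) j
    calc (eval (wRoot p s w (nseq i')) g) ^ p ^ e
        = iterateFrobenius L p e (eval (wRoot p s w (nseq i')) g) := by
          rw [iterateFrobenius_def]
      _ = eval (wRoot p s w (nseq i)) g := by rw [hcomp, hmapfix, hpt]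
  -- residue classes of `s * nseq i` modulo `M`
  set Rm : ℕ → ℕ := fun i => (s * nseq i) % M with hRm
  have hBadfin : {i : ℕ | ({i' : ℕ | Rm i' = Rm i}).Finite}.Finite := by
    have hfin : ∀ r : ℕ, ({i : ℕ | Rm i = r ∧ ({i' : ℕ | Rm i' = r}).Finite}).Finite := by
      intro r
      by_cases h : ({i' : ℕ | Rm i' = r}).Finite
      · exact h.subset fun i hi => hi.1
      · convert Set.finite_empty
        ext i
        simp only [Set.mem_setOf_eq, Set.mem_empty_iff_false, iff_false, not_and]
        exact fun _ hfin => h hfin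
    refine ((Set.finite_Iio M).biUnion fun r _ => hfin r).subset ?_
    intro i hi
    exact Set.mem_biUnion (show Rm i ∈ Set.Iio M from Nat.mod_lt _ (by omega)) ⟨rfl, hi⟩
  obtain ⟨C0, hC0⟩ := hBadfin.bddAbove
  set C := max B (C0 + 1) with hC
  have hmain : ∀ i, C ≤ i → eval (wRoot p s w (nseq i)) (MvPolynomial.map ι f) = 0 := by
    intro i hi
    have hBi : B ≤ i := le_trans (le_max_left _ _) hi
    have hInf : ({i' : ℕ | Rm i' = Rm i}).Infinite := by
      by_contra h
      rw [Set.not_infinite] at h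
      have : i ≤ C0 := hC0 h
      have : C0 + 1 ≤ i := le_trans (le_max_right _ _) hi
      omega
    have key2 : ∀ n : ℕ, v (eval (wRoot p s w (nseq i)) (MvPolynomial.map ι f)) ≤ c ^ n := by
      intro n
      obtain ⟨i', hi'mem, hi'gt⟩ := hInf.exists_gt (nseq i + n)
      have hle_i' : i' ≤ nseq i' := hmono.le_apply
      have hle_i : i ≤ nseq i := hmono.le_apply
      have hii' : i ≤ i' := by omega
      set e := s * (nseq i' - nseq i) with he
      have hediff : nseq i' - nseq i ≤ e := Nat.le_mul_of_pos_left _ (by omega)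
      have hne : n ≤ e := by omega
      have hdvd : M ∣ e := by
        have hsub : e = s * nseq i' - s * nseq i := Nat.mul_sub ..
        rw [hsub]
        exact Nat.dvd_of_mod_eq_zero (Nat.sub_mod_eq_zero_of_mod_eq hi'mem)
      have hkey := key i i' hii' hdvd
      have hb := hbound i' (le_trans hBi hii')
      calc v (eval (wRoot p s w (nseq i)) (MvPolynomial.map ι f))
          = v (eval (wRoot p s w (nseq i')) (MvPolynomial.map ι f)) ^ p ^ e := by
            rw [← hkey, map_pow]
        _ ≤ c ^ p ^ e := pow_le_pow_left₀ (v.nonneg _) hb _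
        _ ≤ c ^ n := pow_le_pow_of_le_one hc0.le hc1.le
            (le_trans hne (Nat.lt_pow_self hp.one_lt : e < p ^ e).le)
    have hE0 : v (eval (wRoot p s w (nseq i)) (MvPolynomial.map ι f)) ≤ 0 :=
      ge_of_tendsto' (tendsto_pow_atTop_nhds_zero_of_lt_one hc0.le hc1) key2
    exact v.eq_zero.mp (le_antisymm hE0 (v.nonneg _))
  refine ⟨⟨C, hmain⟩, fun x hx => ?_⟩
  rw [hZ C (le_trans hAB (le_max_left _ _))] at hx
  exact hx (MvPolynomial.map ι f) hmain
end

section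
/- Let T be a subset of k^N and let Z ⊆ L^N be the common zero set of all polynomials in k[x_1,…,x_N] vanishing on T (the Zariski closure of T over k). Let H ∈ L[x_1,…,x_N] be a polynomial all of whose coefficients lie in L^∘, and let s be a positive integer. If |H(x)| ≤ p^{−s} for every x ∈ T, then |H(y)| ≤ p^{−s} for every y ∈ Z ∩ k^N. -/
open MvPolynomial

set_option maxHeartbeats 1000000
set_option synthInstance.maxHeartbeats 400000

/-- Evaluation commutes with mapping along a ring hom. -/
lemma eval_comp_map_aux {σ A B : Type*} [CommSemiring A] [CommSemiring B] (ψ : A →+* B)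
    (w : σ → A) (P : MvPolynomial σ A) :
    MvPolynomial.eval (fun j => ψ (w j)) (MvPolynomial.map ψ P) = ψ (MvPolynomial.eval w P) := by
  rw [eval_map]
  have := MvPolynomial.eval₂_comp_left ψ (RingHom.id A) w P
  simpa [Function.comp_def] using this.symm

/-- **Lemma 4.8.** Let `k = 𝔽_p-bar ⊆ L`, `T ⊆ k^N`, and let `Z` be the Zariski closure of `T`
over `k` in `L^N`. If `H` is a polynomial over the valuation ring `L^∘` with `|H(x)| ≤ p^{-s}`
for all `x ∈ T`, then `|H(y)| ≤ p^{-s}` for all `y ∈ Z ∩ k^N`. -/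
theorem small_on_dense_subset_implies_small_on_closure
    (p : ℕ) [Fact p.Prime] {N : ℕ}
    (L : Type*) [Field L] [IsAlgClosed L] [CharP L p]
    (v : AbsoluteValue L ℝ) (hna : ∀ x y : L, v (x + y) ≤ max (v x) (v y))
    (ι : AlgebraicClosure (ZMod p) →+* L)
    (hι : ∀ a : AlgebraicClosure (ZMod p), a ≠ 0 → v (ι a) = 1)
    (t : L) (ht : v t = (p : ℝ)⁻¹)
    (T : Set (Fin N → AlgebraicClosure (ZMod p)))
    (Z : Set (Fin N → L))
    (hZ : Z = {x | ∀ f : MvPolynomial (Fin N) (AlgebraicClosure (ZMod p)),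
      (∀ y ∈ T, MvPolynomial.eval y f = 0) → MvPolynomial.eval x (MvPolynomial.map ι f) = 0})
    (H : MvPolynomial (Fin N) L) (hH : ∀ m, v (H.coeff m) ≤ 1)
    (s : ℕ) (hs : 1 ≤ s)
    (hsmall : ∀ x ∈ T, v (MvPolynomial.eval (fun j => ι (x j)) H) ≤ ((p : ℝ) ^ s)⁻¹) :
    ∀ y ∈ Z, (∀ j, ∃ a : AlgebraicClosure (ZMod p), ι a = y j) →
      v (MvPolynomial.eval y H) ≤ ((p : ℝ) ^ s)⁻¹ := by
  classical
  intro y hy hy'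
  choose a ha using hy'
  have hbound_nonneg : (0 : ℝ) ≤ ((p : ℝ) ^ s)⁻¹ := by positivity
  -- the valuation subring
  set O : Subring L :=
    { carrier := {z | v z ≤ 1}
      mul_mem' := fun {x₁ x₂} h1 h2 => by
        simp only [Set.mem_setOf_eq] at *
        rw [map_mul]
        calc v x₁ * v x₂ ≤ 1 * 1 := mul_le_mul h1 h2 (v.nonneg _) zero_le_one
        _ = 1 := one_mul 1
      one_mem' := by simp [Set.mem_setOf_eq]
      add_mem' := fun {x₁ x₂} h1 h2 => by
        simp only [Set.mem_setOf_eq] at *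
        exact le_trans (hna x₁ x₂) (max_le h1 h2)
      zero_mem' := by simp [Set.mem_setOf_eq]
      neg_mem' := fun {x} hx => by
        simp only [Set.mem_setOf_eq] at *
        rw [v.map_neg]
        exact hx } with hO
  -- the ideal of elements of absolute value ≤ p^{-s}
  set I : Ideal O :=
    { carrier := {z | v (z : L) ≤ ((p : ℝ) ^ s)⁻¹}
      add_mem' := fun {x₁ x₂} h1 h2 => by
        simp only [Set.mem_setOf_eq] at *
        push_cast
        exact le_trans (hna _ _) (max_le h1 h2)
      zero_mem' := by simp [Set.mem_setOf_eq, hbound_nonneg]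
      smul_mem' := fun r z hz => by
        simp only [Set.mem_setOf_eq, smul_eq_mul] at *
        push_cast
        rw [map_mul]
        calc v (r : L) * v (z : L) ≤ 1 * ((p : ℝ) ^ s)⁻¹ :=
          mul_le_mul r.2 hz (v.nonneg _) zero_le_one
        _ = ((p : ℝ) ^ s)⁻¹ := one_mul _ } with hI
  have hι1 : ∀ c : AlgebraicClosure (ZMod p), v (ι c) ≤ 1 := fun c => by
    by_cases h : c = 0
    · simp [h]
    · exact le_of_eq (hι c h)
  -- the embedding of k into O
  set ιO : AlgebraicClosure (ZMod p) →+* O :=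
    { toFun := fun c => ⟨ι c, hι1 c⟩
      map_one' := by ext; simp
      map_mul' := fun c₁ c₂ => by ext; simp
      map_zero' := by ext; simp
      map_add' := fun c₁ c₂ => by ext; simp } with hιO
  -- lift H to a polynomial over O
  set H₀ : MvPolynomial (Fin N) O :=
    ∑ m ∈ H.support, monomial m (⟨H.coeff m, hH m⟩ : O) with hH₀def
  have hH₀ : MvPolynomial.map (O.subtype) H₀ = H := by
    rw [hH₀def, map_sum]
    simp only [map_monomial]
    exact H.support_sum_monomial_coeff
  -- the quotient ring R and the map from k
  set R := O ⧸ I with hR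
  set φ : AlgebraicClosure (ZMod p) →+* R := (Ideal.Quotient.mk I).comp ιO with hφ
  letI : Algebra (AlgebraicClosure (ZMod p)) R := φ.toAlgebra
  have halg : (algebraMap (AlgebraicClosure (ZMod p)) R) = φ := rfl
  set Hb : MvPolynomial (Fin N) R := MvPolynomial.map (Ideal.Quotient.mk I) H₀ with hHb
  -- key evaluation identities
  have key : ∀ g : Fin N → AlgebraicClosure (ZMod p),
      MvPolynomial.eval (fun j => φ (g j)) Hb
        = Ideal.Quotient.mk I (MvPolynomial.eval (fun j => ιO (g j)) H₀) := by
    intro g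
    exact eval_comp_map_aux (Ideal.Quotient.mk I) (fun j => ιO (g j)) H₀
  have key2 : ∀ g : Fin N → AlgebraicClosure (ZMod p),
      MvPolynomial.eval (fun j => (ι (g j) : L)) H
        = ((MvPolynomial.eval (fun j => ιO (g j)) H₀ : O) : L) := by
    intro g
    have h := eval_comp_map_aux (O.subtype) (fun j => ιO (g j)) H₀
    rw [hH₀] at h
    rw [show (fun j => (ι (g j) : L)) = fun j => O.subtype (ιO (g j)) from rfl,
      show (((eval fun j => ιO (g j)) H₀ : O) : L) = O.subtype ((eval fun j => ιO (g j)) H₀) from rfl]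
    exact h
  -- Hb vanishes at points of T
  have hT0 : ∀ x ∈ T, MvPolynomial.eval (fun j => φ (x j)) Hb = 0 := by
    intro x hx
    rw [key x, Ideal.Quotient.eq_zero_iff_mem]
    show v ((MvPolynomial.eval (fun j => ιO (x j)) H₀ : O) : L) ≤ ((p : ℝ) ^ s)⁻¹
    rw [← key2 x]
    exact hsmall x hx
  -- duality argument: Hb vanishes at a
  have hzero : MvPolynomial.eval (fun j => φ (a j)) Hb = 0 := by
    rw [← Module.forall_dual_apply_eq_zero_iff (AlgebraicClosure (ZMod p))]
    intro lam
    set flam : MvPolynomial (Fin N) (AlgebraicClosure (ZMod p)) :=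
      ∑ m ∈ Hb.support, monomial m (lam (Hb.coeff m)) with hflam
    have hev : ∀ g : Fin N → AlgebraicClosure (ZMod p),
        lam (MvPolynomial.eval (fun j => φ (g j)) Hb) = MvPolynomial.eval g flam := by
      intro g
      rw [eval_eq' (fun j => φ (g j)) Hb, map_sum, hflam, map_sum]
      refine Finset.sum_congr rfl fun m _ => ?_
      rw [eval_monomial, Finsupp.prod_pow]
      have hprod : (∏ i, φ (g i) ^ m i) = φ (∏ i, g i ^ m i) := by
        rw [map_prod]
        simp [map_pow]
      rw [hprod, mul_comm, ← halg, ← Algebra.smul_def, map_smul, smul_eq_mul, mul_comm]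
    have hTf : ∀ x ∈ T, MvPolynomial.eval x flam = 0 := by
      intro x hx
      rw [← hev x, hT0 x hx, map_zero]
    have hZf : MvPolynomial.eval y (MvPolynomial.map ι flam) = 0 := by
      rw [hZ] at hy
      exact hy flam hTf
    have hya : y = fun j => ι (a j) := by funext j; exact (ha j).symm
    have hιf : ι (MvPolynomial.eval a flam) = 0 := by
      rw [← eval_comp_map_aux ι a flam, ← hya]
      exact hZf
    have h0 : MvPolynomial.eval a flam = 0 := by
      by_contra h
      have := hι _ h
      rw [hιf, map_zero] at this
      exact zero_ne_one this
    rw [hev a, h0]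
  -- conclude
  have hmem : (MvPolynomial.eval (fun j => ιO (a j)) H₀ : O) ∈ I := by
    rw [← Ideal.Quotient.eq_zero_iff_mem, ← key a]
    exact hzero
  have hya : y = fun j => ι (a j) := by funext j; exact (ha j).symm
  rw [hya, key2 a]
  exact hmem
end

section
/- The reduction map red : ℙ^N(ℂ_p) → ℙ^N(k̄) restricts to a bijection from the set Per of F-periodic points onto ℙ^N(k̄); equivalently, for every y ∈ ℙ^N(k̄) the fiber red^{−1}(y) contains exactly one F-periodic point. -/
open scoped LinearAlgebra.Projectivization
open MvPolynomial

/-- `K` is a model of `ℂ_p`: a complete algebraically closed nonarchimedean normed field,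
isometrically extending `ℚ_p`, in which the algebraic elements over `ℚ_p` are dense
(so that `K` is the completion of an algebraic closure of `ℚ_p`). -/
structure IsCp (p : ℕ) [Fact p.Prime] (K : Type*) [NormedField K] [Algebra ℚ_[p] K] : Prop where
  nonarch : ∀ x y : K, ‖x + y‖ ≤ max ‖x‖ ‖y‖
  isometry : ∀ a : ℚ_[p], ‖algebraMap ℚ_[p] K a‖ = ‖a‖
  algClosed : IsAlgClosed K
  complete : CompleteSpace K
  denseAlgebraic : ∀ (x : K) (ε : ℝ), 0 < ε → ∃ y : K, IsAlgebraic ℚ_[p] y ∧ ‖x - y‖ < ε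

/-- A homogeneous polynomial vanishes at a projective point (tested on any representative). -/
def VanishesAt {K : Type*} [Field K] {N : ℕ} (H : MvPolynomial (Fin (N + 1)) K)
    (x : ℙ K (Fin (N + 1) → K)) : Prop :=
  ∀ (v : Fin (N + 1) → K) (hv : v ≠ 0), x = Projectivization.mk K v hv →
    MvPolynomial.eval v H = 0

/-- A subvariety of `ℙ^N` is the common zero set of finitely many homogeneous polynomials. -/
def IsSubvariety {K : Type*} [Field K] {N : ℕ} (V : Set (ℙ K (Fin (N + 1) → K))) : Prop :=
  ∃ (m : ℕ) (H : Fin m → MvPolynomial (Fin (N + 1)) K),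
    (∀ j, ∃ d, (H j).IsHomogeneous d) ∧ V = {x | ∀ j, VanishesAt (H j) x}

/-- `S` is Zariski dense in `V`: `S ⊆ V` and every homogeneous polynomial vanishing on `S`
vanishes on `V`. -/
def ZariskiDenseIn {K : Type*} [Field K] {N : ℕ} (S V : Set (ℙ K (Fin (N + 1) → K))) : Prop :=
  S ⊆ V ∧ ∀ (H : MvPolynomial (Fin (N + 1)) K) (d : ℕ), H.IsHomogeneous d →
    (∀ x ∈ S, VanishesAt H x) → ∀ x ∈ V, VanishesAt H x

/-- An irreducible subvariety: nonempty and not the union of two proper subvarieties of it. -/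
def IsIrreducibleSubvariety {K : Type*} [Field K] {N : ℕ}
    (V : Set (ℙ K (Fin (N + 1) → K))) : Prop :=
  IsSubvariety V ∧ V.Nonempty ∧
    ¬ ∃ V₁ V₂ : Set (ℙ K (Fin (N + 1) → K)), IsSubvariety V₁ ∧ IsSubvariety V₂ ∧
      V₁ ⊆ V ∧ V₂ ⊆ V ∧ V₁ ≠ V ∧ V₂ ≠ V ∧ V = V₁ ∪ V₂

/-- A polynomial has Gauss norm one: all coefficients have norm `≤ 1` and some coefficient
has norm `1`. -/
def GaussNormOne {K : Type*} [NormedField K] {n : ℕ} (H : MvPolynomial (Fin n) K) : Prop :=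
  (∀ m, ‖H.coeff m‖ ≤ 1) ∧ ∃ m, ‖H.coeff m‖ = 1

/-- A vector of sup-norm one (the normalized homogeneous coordinates of a projective point). -/
def UnitRep {K : Type*} [NormedField K] {n : ℕ} (v : Fin n → K) : Prop :=
  (∀ i, ‖v i‖ ≤ 1) ∧ ∃ i, ‖v i‖ = 1

/-- `x ∈ ℙ^N(ℂ_p)` reduces to `y ∈ ℙ^N(k̄)`: some homogeneous coordinates of `x` of sup-norm one
map coordinatewise, under the residue map `res` on the valuation ring `O`, to homogeneous
coordinates of `y`. -/
def RedTo {K : Type*} [NormedField K] {N : ℕ} {kbar : Type*} [Field kbar]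
    (O : Subring K) (hO : ∀ z : K, z ∈ O ↔ ‖z‖ ≤ 1) (res : O →+* kbar)
    (x : ℙ K (Fin (N + 1) → K)) (y : ℙ kbar (Fin (N + 1) → kbar)) : Prop :=
  ∃ (v : Fin (N + 1) → K) (hv : v ≠ 0) (hle : ∀ i, ‖v i‖ ≤ 1),
    (∃ i, ‖v i‖ = 1) ∧ x = Projectivization.mk K v hv ∧
      ∃ hw : (fun i => res ⟨v i, (hO (v i)).mpr (hle i)⟩) ≠ 0,
        y = Projectivization.mk kbar (fun i => res ⟨v i, (hO (v i)).mpr (hle i)⟩) hw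



section NA
variable {K : Type*} [NormedField K] (na : ∀ x y : K, ‖x + y‖ ≤ max ‖x‖ ‖y‖)
include na

lemma na_add_le {x y : K} {a : ℝ} (hx : ‖x‖ ≤ a) (hy : ‖y‖ ≤ a) : ‖x + y‖ ≤ a :=
  (na x y).trans (max_le hx hy)

lemma na_sub_le {x y : K} {a : ℝ} (hx : ‖x‖ ≤ a) (hy : ‖y‖ ≤ a) : ‖x - y‖ ≤ a := by
  rw [sub_eq_add_neg]
  exact na_add_le na hx (by simpa using hy)

lemma na_sum {ι : Type*} (s : Finset ι) (f : ι → K) {d : ℝ} (hd : 0 ≤ d)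
    (h : ∀ i ∈ s, ‖f i‖ ≤ d) : ‖∑ i ∈ s, f i‖ ≤ d := by
  classical
  induction s using Finset.induction with
  | empty => simpa
  | @insert j s hj ih =>
    rw [Finset.sum_insert hj]
    exact na_add_le na (h j (Finset.mem_insert_self j s))
      (ih fun i hi => h i (Finset.mem_insert_of_mem hi))

lemma na_add_eq {x y : K} (h : ‖y‖ < ‖x‖) : ‖x + y‖ = ‖x‖ := by
  refine le_antisymm ((na x y).trans (max_le le_rfl h.le)) ?_
  by_contra hc
  push_neg at hc
  have h2 : ‖x‖ ≤ max ‖x + y‖ ‖y‖ := by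
    have := na (x + y) (-y)
    simpa using this
  rcases max_cases ‖x + y‖ ‖y‖ with ⟨he, _⟩ | ⟨he, _⟩ <;> rw [he] at h2
  · exact absurd h2 (not_le.2 hc)
  · exact absurd h2 (not_le.2 h)

lemma na_pow_sub_pow {x y : K} (hx : ‖x‖ ≤ 1) (hy : ‖y‖ ≤ 1) (k : ℕ) :
    ‖x ^ k - y ^ k‖ ≤ ‖x - y‖ := by
  induction k with
  | zero => simp
  | succ k ih =>
    have hid : x ^ (k + 1) - y ^ (k + 1) = x * (x ^ k - y ^ k) + (x - y) * y ^ k := by ring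
    rw [hid]
    refine na_add_le na ?_ ?_
    · rw [norm_mul]
      calc ‖x‖ * ‖x ^ k - y ^ k‖ ≤ 1 * ‖x - y‖ := by
            exact mul_le_mul hx ih (norm_nonneg _) zero_le_one
        _ = ‖x - y‖ := one_mul _
    · rw [norm_mul]
      calc ‖x - y‖ * ‖y ^ k‖ ≤ ‖x - y‖ * 1 := by
            refine mul_le_mul_of_nonneg_left ?_ (norm_nonneg _)
            rw [norm_pow]; exact pow_le_one₀ (norm_nonneg _) hy
        _ = ‖x - y‖ := mul_one _

lemma na_prod_sub_prod {ι : Type*} (s : Finset ι) (a b : ι → K) {d : ℝ} (hd : 0 ≤ d)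
    (ha : ∀ i ∈ s, ‖a i‖ ≤ 1) (hb : ∀ i ∈ s, ‖b i‖ ≤ 1)
    (hab : ∀ i ∈ s, ‖a i - b i‖ ≤ d) :
    ‖(∏ i ∈ s, a i) - ∏ i ∈ s, b i‖ ≤ d := by
  classical
  induction s using Finset.induction with
  | empty => simpa
  | @insert j s hj ih =>
    rw [Finset.prod_insert hj, Finset.prod_insert hj]
    have hid : a j * (∏ i ∈ s, a i) - b j * (∏ i ∈ s, b i)
        = a j * ((∏ i ∈ s, a i) - ∏ i ∈ s, b i) + (a j - b j) * ∏ i ∈ s, b i := by ring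
    rw [hid]
    refine na_add_le na ?_ ?_
    · rw [norm_mul]
      calc ‖a j‖ * ‖(∏ i ∈ s, a i) - ∏ i ∈ s, b i‖ ≤ 1 * d := by
            refine mul_le_mul (ha j (Finset.mem_insert_self j s)) ?_ (norm_nonneg _) zero_le_one
            exact ih (fun i hi => ha i (Finset.mem_insert_of_mem hi))
              (fun i hi => hb i (Finset.mem_insert_of_mem hi))
              (fun i hi => hab i (Finset.mem_insert_of_mem hi))
        _ = d := one_mul _
    · rw [norm_mul]
      calc ‖a j - b j‖ * ‖∏ i ∈ s, b i‖ ≤ d * 1 := by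
            refine mul_le_mul (hab j (Finset.mem_insert_self j s)) ?_ (norm_nonneg _) hd
            rw [norm_prod]
            exact Finset.prod_le_one (fun i _ => norm_nonneg _)
              (fun i hi => hb i (Finset.mem_insert_of_mem hi))
        _ = d := mul_one _

lemma na_eval_le {n : ℕ} (H : MvPolynomial (Fin n) K) (hH : ∀ m, ‖H.coeff m‖ ≤ 1)
    (v : Fin n → K) (hv : ∀ i, ‖v i‖ ≤ 1) : ‖MvPolynomial.eval v H‖ ≤ 1 := by
  rw [MvPolynomial.eval_eq]
  refine na_sum na _ _ zero_le_one fun m _ => ?_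
  rw [norm_mul]
  calc ‖H.coeff m‖ * ‖∏ i ∈ m.support, v i ^ m i‖ ≤ 1 * 1 := by
        refine mul_le_mul (hH m) ?_ (norm_nonneg _) zero_le_one
        rw [norm_prod]
        refine Finset.prod_le_one (fun i _ => norm_nonneg _) (fun i _ => ?_)
        rw [norm_pow]; exact pow_le_one₀ (norm_nonneg _) (hv i)
    _ = 1 := one_mul _

lemma na_eval_sub {n : ℕ} (H : MvPolynomial (Fin n) K) (hH : ∀ m, ‖H.coeff m‖ ≤ 1)
    (u v : Fin n → K) (hu : ∀ i, ‖u i‖ ≤ 1) (hv : ∀ i, ‖v i‖ ≤ 1) {d : ℝ} (hd : 0 ≤ d)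
    (huv : ∀ i, ‖u i - v i‖ ≤ d) :
    ‖MvPolynomial.eval u H - MvPolynomial.eval v H‖ ≤ d := by
  rw [MvPolynomial.eval_eq, MvPolynomial.eval_eq, ← Finset.sum_sub_distrib]
  refine na_sum na _ _ hd fun m _ => ?_
  rw [← mul_sub, norm_mul]
  calc ‖H.coeff m‖ * ‖(∏ i ∈ m.support, u i ^ m i) - ∏ i ∈ m.support, v i ^ m i‖ ≤ 1 * d := by
        refine mul_le_mul (hH m) ?_ (norm_nonneg _) zero_le_one
        refine na_prod_sub_prod na _ _ _ hd ?_ ?_ ?_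
        · intro i _; rw [norm_pow]; exact pow_le_one₀ (norm_nonneg _) (hu i)
        · intro i _; rw [norm_pow]; exact pow_le_one₀ (norm_nonneg _) (hv i)
        · intro i _; exact (na_pow_sub_pow na (hu i) (hv i) (m i)).trans (huv i)
    _ = d := one_mul _

lemma na_pow_sub_pow_strong {x y : K} (hx : ‖x‖ ≤ 1) (hy : ‖y‖ ≤ 1) {d : ℝ}
    (hxy : ‖x - y‖ ≤ d) (n : ℕ) :
    ‖x ^ n - y ^ n‖ ≤ max ‖(n : K)‖ d * d := by
  have hd : 0 ≤ d := le_trans (norm_nonneg _) hxy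
  rw [← geom_sum₂_mul x y n, norm_mul]
  refine mul_le_mul ?_ hxy (norm_nonneg _) (le_trans hd (le_max_right _ _))
  -- bound the geometric sum
  have hid : (∑ i ∈ Finset.range n, x ^ i * y ^ (n - 1 - i))
      = (∑ i ∈ Finset.range n, (x ^ i * y ^ (n - 1 - i) - x ^ (n - 1))) + (n : K) * x ^ (n - 1) := by
    rw [Finset.sum_sub_distrib, Finset.sum_const, Finset.card_range, nsmul_eq_mul]
    ring
  rw [hid]
  have h1 : ‖∑ i ∈ Finset.range n, (x ^ i * y ^ (n - 1 - i) - x ^ (n - 1))‖ ≤ d := by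
    refine na_sum na _ _ hd fun i hi => ?_
    have hin : i ≤ n - 1 := Nat.le_pred_of_lt (Finset.mem_range.1 hi)
    have hexp : x ^ i * x ^ (n - 1 - i) = x ^ (n - 1) := by
      rw [← pow_add]; congr 1; omega
    have hid2 : x ^ i * y ^ (n - 1 - i) - x ^ (n - 1)
        = x ^ i * (y ^ (n - 1 - i) - x ^ (n - 1 - i)) := by
      rw [mul_sub, hexp]
    rw [hid2, norm_mul]
    calc ‖x ^ i‖ * ‖y ^ (n - 1 - i) - x ^ (n - 1 - i)‖ ≤ 1 * d := by
          refine mul_le_mul ?_ ?_ (norm_nonneg _) zero_le_one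
          · rw [norm_pow]; exact pow_le_one₀ (norm_nonneg _) hx
          · refine (na_pow_sub_pow na hy hx _).trans ?_
            rw [norm_sub_rev]; exact hxy
      _ = d := one_mul _
  have h2 : ‖(n : K) * x ^ (n - 1)‖ ≤ ‖(n : K)‖ := by
    rw [norm_mul]
    calc ‖(n : K)‖ * ‖x ^ (n - 1)‖ ≤ ‖(n : K)‖ * 1 := by
          refine mul_le_mul_of_nonneg_left ?_ (norm_nonneg _)
          rw [norm_pow]; exact pow_le_one₀ (norm_nonneg _) hx
      _ = ‖(n : K)‖ := mul_one _
  exact (na _ _).trans (max_le (h1.trans (le_max_right _ _)) (h2.trans (le_max_left _ _)))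

end NA


section ResO
variable {K : Type*} [NormedField K] {kbar : Type*} [Field kbar]
variable (O : Subring K) (hO : ∀ z : K, z ∈ O ↔ ‖z‖ ≤ 1) (res : O →+* kbar)

noncomputable def resO (z : K) : kbar :=
  if h : ‖z‖ ≤ 1 then res ⟨z, (hO z).2 h⟩ else 0

variable {O res}

lemma resO_def {hO : ∀ z : K, z ∈ O ↔ ‖z‖ ≤ 1} {z : K} (h : ‖z‖ ≤ 1) :
    resO O hO res z = res ⟨z, (hO z).2 h⟩ := dif_pos h

lemma resO_coe {hO : ∀ z : K, z ∈ O ↔ ‖z‖ ≤ 1} (z : O) : resO O hO res (z : K) = res z := by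
  rw [resO_def ((hO (z : K)).1 z.2)]

lemma resO_one {hO : ∀ z : K, z ∈ O ↔ ‖z‖ ≤ 1} : resO O hO res 1 = 1 := by
  have : ((1 : O) : K) = 1 := rfl
  rw [← this, resO_coe, map_one]

lemma resO_natCast {hO : ∀ z : K, z ∈ O ↔ ‖z‖ ≤ 1} (k : ℕ) :
    resO O hO res ((k : ℕ) : K) = ((k : ℕ) : kbar) := by
  have : (((k : ℕ) : O) : K) = ((k : ℕ) : K) := by push_cast; ring
  rw [← this, resO_coe, map_natCast]

lemma resO_mul {hO : ∀ z : K, z ∈ O ↔ ‖z‖ ≤ 1} {x y : K} (hx : ‖x‖ ≤ 1) (hy : ‖y‖ ≤ 1) :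
    resO O hO res (x * y) = resO O hO res x * resO O hO res y := by
  have hxy : ‖x * y‖ ≤ 1 := by
    rw [norm_mul]; exact mul_le_one₀ hx (norm_nonneg _) hy
  rw [resO_def hx, resO_def hy, resO_def hxy, ← map_mul]
  congr 1

lemma resO_pow {hO : ∀ z : K, z ∈ O ↔ ‖z‖ ≤ 1} {x : K} (hx : ‖x‖ ≤ 1) (k : ℕ) :
    resO O hO res (x ^ k) = (resO O hO res x) ^ k := by
  induction k with
  | zero => simpa using resO_one
  | succ k ih =>
    rw [pow_succ, pow_succ, ← ih, resO_mul (by rw [norm_pow]; exact pow_le_one₀ (norm_nonneg _) hx) hx]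

lemma resO_add (na : ∀ x y : K, ‖x + y‖ ≤ max ‖x‖ ‖y‖)
    {hO : ∀ z : K, z ∈ O ↔ ‖z‖ ≤ 1} {x y : K} (hx : ‖x‖ ≤ 1) (hy : ‖y‖ ≤ 1) :
    resO O hO res (x + y) = resO O hO res x + resO O hO res y := by
  have hxy : ‖x + y‖ ≤ 1 := na_add_le na hx hy
  rw [resO_def hx, resO_def hy, resO_def hxy, ← map_add]
  congr 1

lemma resO_sum (na : ∀ x y : K, ‖x + y‖ ≤ max ‖x‖ ‖y‖)
    {hO : ∀ z : K, z ∈ O ↔ ‖z‖ ≤ 1} {ι : Type*} (s : Finset ι) (f : ι → K)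
    (h : ∀ i ∈ s, ‖f i‖ ≤ 1) :
    resO O hO res (∑ i ∈ s, f i) = ∑ i ∈ s, resO O hO res (f i) := by
  classical
  induction s using Finset.induction with
  | empty =>
    have h0 : ((0 : O) : K) = 0 := rfl
    rw [Finset.sum_empty, Finset.sum_empty, ← h0, resO_coe, map_zero]
  | @insert j s hj ih =>
    rw [Finset.sum_insert hj, Finset.sum_insert hj,
      resO_add na (h j (Finset.mem_insert_self j s))
        (na_sum na _ _ zero_le_one fun i hi => h i (Finset.mem_insert_of_mem hi)),
      ih fun i hi => h i (Finset.mem_insert_of_mem hi)]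

variable (hres_ker : ∀ z : O, res z = 0 ↔ ‖(z : K)‖ < 1)
include hres_ker

lemma resO_eq_zero_iff {hO : ∀ z : K, z ∈ O ↔ ‖z‖ ≤ 1} {x : K} (hx : ‖x‖ ≤ 1) :
    resO O hO res x = 0 ↔ ‖x‖ < 1 := by
  rw [resO_def hx]; exact hres_ker _

lemma resO_eq_iff (na : ∀ x y : K, ‖x + y‖ ≤ max ‖x‖ ‖y‖)
    {hO : ∀ z : K, z ∈ O ↔ ‖z‖ ≤ 1} {x y : K} (hx : ‖x‖ ≤ 1) (hy : ‖y‖ ≤ 1) :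
    resO O hO res x = resO O hO res y ↔ ‖x - y‖ < 1 := by
  have hs : ‖x - y‖ ≤ 1 := na_sub_le na hx hy
  have hrw : resO O hO res (x - y) = resO O hO res x - resO O hO res y := by
    have : x - y + y = x := by ring
    have h2 := resO_add (res := res) na (hO := hO) hs hy
    rw [this] at h2
    rw [h2]; ring
  rw [← resO_eq_zero_iff (hO := hO) hres_ker hs, hrw, sub_eq_zero]

omit hres_ker

lemma resO_inv {hO : ∀ z : K, z ∈ O ↔ ‖z‖ ≤ 1} {x : K} (hx : ‖x‖ = 1) :
    resO O hO res x⁻¹ = (resO O hO res x)⁻¹ := by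
  have hx0 : x ≠ 0 := by
    intro h; rw [h, norm_zero] at hx; exact zero_ne_one hx
  have hxi : ‖x⁻¹‖ ≤ 1 := by rw [norm_inv, hx]; norm_num
  have hmul : resO O hO res x * resO O hO res x⁻¹ = 1 := by
    rw [← resO_mul hx.le hxi, mul_inv_cancel₀ hx0, resO_one]
  exact (eq_inv_of_mul_eq_one_left (by rw [mul_comm] at hmul; exact hmul)).symm ▸ rfl

end ResO

open IntermediateField in
lemma residue_pow_p_fixed {p : ℕ} [Fact p.Prime] {K : Type*} [NormedField K]
    [Algebra ℚ_[p] K] (hK : IsCp p K)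
    (O : Subring K) (hO : ∀ z : K, z ∈ O ↔ ‖z‖ ≤ 1) {kbar : Type*} [Field kbar]
    (res : O →+* kbar) (hres_surj : Function.Surjective res)
    (hres_ker : ∀ z : O, res z = 0 ↔ ‖(z : K)‖ < 1) (a : kbar) :
    ∃ m : ℕ, 1 ≤ m ∧ a ^ p ^ m = a := by
  classical
  have hp : p.Prime := Fact.out
  have na := hK.nonarch
  -- ‖p‖ < 1 in K
  have hpK : ‖((p : ℕ) : K)‖ = (p : ℝ)⁻¹ := by
    have h1 : ((p : ℕ) : K) = algebraMap ℚ_[p] K ((p : ℕ) : ℚ_[p]) := (map_natCast _ p).symm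
    rw [h1, hK.isometry]
    exact_mod_cast Padic.norm_p
  have hp1 : (1 : ℝ) < p := by exact_mod_cast hp.one_lt
  have hpKlt : ‖((p : ℕ) : K)‖ < 1 := by rw [hpK]; exact inv_lt_one_of_one_lt₀ hp1
  -- kbar has characteristic p
  have hchar0 : ((p : ℕ) : kbar) = 0 := by
    have h1 : res ((p : ℕ) : O) = ((p : ℕ) : kbar) := map_natCast _ _
    have h2 : ‖(((p : ℕ) : O) : K)‖ < 1 := by
      rw [show (((p : ℕ) : O) : K) = ((p : ℕ) : K) by push_cast; ring]
      exact hpKlt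
    rw [← h1]; exact (hres_ker _).2 h2
  have hcharP : ringChar kbar = p := by
    rcases (Nat.Prime.eq_one_or_self_of_dvd hp _ (ringChar.dvd hchar0)) with h | h
    · exfalso
      haveI : CharP kbar 1 := h ▸ ringChar.charP kbar
      exact CharP.false_of_nontrivial_of_char_one (R := kbar)
    · exact h
  haveI : CharP kbar p := hcharP ▸ ringChar.charP kbar
  letI : Algebra (ZMod p) kbar := ZMod.algebra kbar p
  -- lift a and approximate by an algebraic element
  obtain ⟨z, hz⟩ := hres_surj a
  obtain ⟨t, ht_alg, ht_close⟩ := hK.denseAlgebraic (z : K) 1 one_pos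
  have hzle : ‖(z : K)‖ ≤ 1 := (hO _).1 z.2
  have htle : ‖t‖ ≤ 1 := by
    have h1 : t = (z : K) - ((z : K) - t) := by ring
    rw [h1]
    exact na_sub_le na hzle ht_close.le
  have hrest : resO O hO res t = a := by
    have h1 : resO O hO res (z : K) = resO O hO res t := by
      rw [resO_eq_iff hres_ker na hzle htle]
      exact ht_close
    rw [← h1, resO_coe, hz]
  -- normalize the algebraic relation
  obtain ⟨g, hg0, hgt⟩ := ht_alg
  obtain ⟨j, hjS, hjmax⟩ := Finset.exists_max_image g.support (fun i => ‖g.coeff i‖)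
    (Polynomial.support_nonempty.2 hg0)
  have hcj : g.coeff j ≠ 0 := Polynomial.mem_support_iff.1 hjS
  set g' : Polynomial ℚ_[p] := Polynomial.C (g.coeff j)⁻¹ * g with hg'
  have hg'co : ∀ i, ‖g'.coeff i‖ ≤ 1 := by
    intro i
    rw [hg', Polynomial.coeff_C_mul, norm_mul, norm_inv]
    by_cases hgi : g.coeff i = 0
    · rw [hgi, norm_zero, mul_zero]; norm_num
    · have := hjmax i (Polynomial.mem_support_iff.2 hgi)
      rw [inv_mul_le_iff₀ (norm_pos_iff.2 hcj)]
      simpa using this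
  have hg'j : g'.coeff j = 1 := by
    rw [hg', Polynomial.coeff_C_mul, inv_mul_cancel₀ hcj]
  have hg't : Polynomial.aeval t g' = 0 := by
    rw [hg', map_mul, hgt, mul_zero]
  -- read off the relation in the residue field
  set n₀ := g'.natDegree with hn₀
  set b : ℕ → kbar := fun i => resO O hO res (algebraMap ℚ_[p] K (g'.coeff i)) with hb
  have hble : ∀ i, ‖algebraMap ℚ_[p] K (g'.coeff i)‖ ≤ 1 := by
    intro i; rw [hK.isometry]; exact hg'co i
  have hsum : ∑ i ∈ Finset.range (n₀ + 1), b i * a ^ i = 0 := by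
    have h1 : (0 : K) = ∑ i ∈ Finset.range (n₀ + 1), algebraMap ℚ_[p] K (g'.coeff i) * t ^ i := by
      rw [← hg't, Polynomial.aeval_eq_sum_range]
      congr 1; funext i
      rw [Algebra.smul_def]
    have hterm : ∀ i ∈ Finset.range (n₀ + 1), ‖algebraMap ℚ_[p] K (g'.coeff i) * t ^ i‖ ≤ 1 := by
      intro i _
      rw [norm_mul, norm_pow]
      exact mul_le_one₀ (hble i) (pow_nonneg (norm_nonneg _) _) (pow_le_one₀ (norm_nonneg _) htle)
    have h2 : resO O hO res (0 : K) = 0 := by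
      have h0 : ((0 : O) : K) = 0 := rfl
      rw [← h0, resO_coe, map_zero]
    calc ∑ i ∈ Finset.range (n₀ + 1), b i * a ^ i
        = ∑ i ∈ Finset.range (n₀ + 1),
            resO O hO res (algebraMap ℚ_[p] K (g'.coeff i) * t ^ i) := by
          refine Finset.sum_congr rfl fun i _ => ?_
          rw [resO_mul (hble i) (by rw [norm_pow]; exact pow_le_one₀ (norm_nonneg _) htle),
            resO_pow htle, hb, hrest]
      _ = resO O hO res (∑ i ∈ Finset.range (n₀ + 1), algebraMap ℚ_[p] K (g'.coeff i) * t ^ i) :=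
          (resO_sum na _ _ hterm).symm
      _ = 0 := by rw [← h1, h2]
  -- each coefficient b i is in the image of ZMod p
  have hbZ : ∀ i, ∃ β : ZMod p, algebraMap (ZMod p) kbar β = b i := by
    intro i
    set c : ℤ_[p] := ⟨g'.coeff i, hg'co i⟩ with hc
    refine ⟨((c.zmodRepr : ℕ) : ZMod p), ?_⟩
    have hnear : ‖g'.coeff i - ((c.zmodRepr : ℕ) : ℚ_[p])‖ < 1 := by
      have h1 := PadicInt.sub_zmodRepr_mem c
      rw [PadicInt.maximalIdeal_eq_span_p, Ideal.mem_span_singleton] at h1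
      have h2 : ‖c - ((c.zmodRepr : ℕ) : ℤ_[p])‖ < 1 := (PadicInt.norm_lt_one_iff_dvd _).2 h1
      have h3 : ((c - ((c.zmodRepr : ℕ) : ℤ_[p]) : ℤ_[p]) : ℚ_[p])
          = g'.coeff i - ((c.zmodRepr : ℕ) : ℚ_[p]) := by
        rw [PadicInt.coe_sub, PadicInt.coe_natCast]
      rw [← h3, PadicInt.padic_norm_e_of_padicInt]
      exact h2
    have hKnear : ‖algebraMap ℚ_[p] K (g'.coeff i) - ((c.zmodRepr : ℕ) : K)‖ < 1 := by
      have h4 : algebraMap ℚ_[p] K (g'.coeff i) - ((c.zmodRepr : ℕ) : K)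
          = algebraMap ℚ_[p] K (g'.coeff i - ((c.zmodRepr : ℕ) : ℚ_[p])) := by
        rw [map_sub, map_natCast]
      rw [h4, hK.isometry]
      exact hnear
    have hkle : ‖((c.zmodRepr : ℕ) : K)‖ ≤ 1 := by
      have h5 : ((c.zmodRepr : ℕ) : K) = algebraMap ℚ_[p] K ((c.zmodRepr : ℕ) : ℚ_[p]) :=
        (map_natCast _ _).symm
      rw [h5, hK.isometry]
      have := PadicInt.norm_le_one ((c.zmodRepr : ℕ) : ℤ_[p])
      rw [← PadicInt.padic_norm_e_of_padicInt] at this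
      exact_mod_cast this
    have h6 : b i = resO O hO res ((c.zmodRepr : ℕ) : K) := by
      rw [hb]
      exact (resO_eq_iff hres_ker na (hble i) hkle).2 hKnear
    rw [h6, resO_natCast, map_natCast]
  choose β hβ using hbZ
  -- a is algebraic over ZMod p
  have halg : IsAlgebraic (ZMod p) a := by
    refine ⟨∑ i ∈ Finset.range (n₀ + 1), Polynomial.C (β i) * Polynomial.X ^ i, ?_, ?_⟩
    · intro hQ
      have hjn : j ∈ Finset.range (n₀ + 1) := by
        rw [Finset.mem_range, Nat.lt_succ_iff, hn₀]
        exact Polynomial.le_natDegree_of_ne_zero (by rw [hg'j]; exact one_ne_zero)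
      have hcoe : (∑ i ∈ Finset.range (n₀ + 1), Polynomial.C (β i) * Polynomial.X ^ i).coeff j
          = β j := by
        rw [Polynomial.finset_sum_coeff]
        rw [Finset.sum_eq_single j]
        · rw [Polynomial.coeff_C_mul, Polynomial.coeff_X_pow, if_pos rfl, mul_one]
        · intro i _ hij
          rw [Polynomial.coeff_C_mul, Polynomial.coeff_X_pow, if_neg (Ne.symm hij), mul_zero]
        · intro h; exact absurd hjn h
      have hβj : β j ≠ 0 := by
        intro h0
        have := hβ j
        rw [h0, map_zero] at this
        have hbj : b j = 1 := by
          show resO O hO res (algebraMap ℚ_[p] K (g'.coeff j)) = 1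
          rw [hg'j, map_one]
          exact resO_one
        rw [hbj] at this
        exact one_ne_zero this.symm
      rw [hQ, Polynomial.coeff_zero] at hcoe
      exact hβj hcoe.symm
    · rw [map_sum]
      calc ∑ i ∈ Finset.range (n₀ + 1), Polynomial.aeval a (Polynomial.C (β i) * Polynomial.X ^ i)
          = ∑ i ∈ Finset.range (n₀ + 1), b i * a ^ i := by
            refine Finset.sum_congr rfl fun i _ => ?_
            rw [map_mul, Polynomial.aeval_C, map_pow, Polynomial.aeval_X, hβ i]
        _ = 0 := hsum
  -- conclude via a finite subfield
  have hint : IsIntegral (ZMod p) a := isAlgebraic_iff_isIntegral.1 halg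
  haveI : FiniteDimensional (ZMod p) ↥(ZMod p)⟮a⟯ :=
    IntermediateField.adjoin.finiteDimensional hint
  haveI : Finite ↥(ZMod p)⟮a⟯ := Module.finite_of_finite (ZMod p)
  haveI : Fintype ↥(ZMod p)⟮a⟯ := Fintype.ofFinite _
  haveI : CharP ↥(ZMod p)⟮a⟯ p :=
    charP_of_injective_algebraMap (algebraMap (ZMod p) ↥(ZMod p)⟮a⟯).injective p
  obtain ⟨m, -, hcard⟩ := FiniteField.card ↥(ZMod p)⟮a⟯ p
  refine ⟨m, m.one_le, ?_⟩
  have hgen := FiniteField.pow_card (IntermediateField.AdjoinSimple.gen (ZMod p) a)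
  rw [hcard] at hgen
  have := congrArg (fun x : ↥(ZMod p)⟮a⟯ => (x : kbar)) hgen
  simpa [IntermediateField.AdjoinSimple.coe_gen] using this

/-- **Reduction is a bijection on periodic points.** The reduction map
`red : ℙ^N(ℂ_p) → ℙ^N(k̄)` restricts to a bijection from the set of periodic points of a lift of
Frobenius onto `ℙ^N(k̄)`: every fiber of `red` contains exactly one periodic point. -/
theorem reduction_bijective_on_periodic_lift_of_frobenius
    {p : ℕ} [Fact p.Prime] {K : Type*} [NormedField K] [Algebra ℚ_[p] K] (hK : IsCp p K)
    {N : ℕ} (s : ℕ) (hs : 1 ≤ s)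
    (P : Fin (N + 1) → MvPolynomial (Fin (N + 1)) K)
    (hPhom : ∀ i, (P i).IsHomogeneous (p ^ s))
    (hPint : ∀ i m, ‖(P i).coeff m‖ ≤ 1)
    (F : ℙ K (Fin (N + 1) → K) → ℙ K (Fin (N + 1) → K))
    (hFnz : ∀ v : Fin (N + 1) → K, v ≠ 0 →
      (fun i => v i ^ p ^ s + (p : K) * MvPolynomial.eval v (P i)) ≠ 0)
    (hF : ∀ (v : Fin (N + 1) → K) (hv : v ≠ 0),
      F (Projectivization.mk K v hv) =
        Projectivization.mk K (fun i => v i ^ p ^ s + (p : K) * MvPolynomial.eval v (P i))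
          (hFnz v hv))
    (Per : Set (ℙ K (Fin (N + 1) → K)))
    (hPer : ∀ x, x ∈ Per ↔ ∃ n, 1 ≤ n ∧ F^[n] x = x)
    (O : Subring K) (hO : ∀ z : K, z ∈ O ↔ ‖z‖ ≤ 1)
    (kbar : Type*) [Field kbar] (res : O →+* kbar)
    (hres_surj : Function.Surjective res)
    (hres_ker : ∀ z : O, res z = 0 ↔ ‖(z : K)‖ < 1) :
    ∀ y : ℙ kbar (Fin (N + 1) → kbar), ∃! x, x ∈ Per ∧ RedTo O hO res x y := by
  classical
  have hp : p.Prime := Fact.out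
  have na := hK.nonarch
  haveI := hK.complete
  set ρ : K → kbar := resO O hO res with hρdef
  -- basic norms
  have hpK : ‖((p : ℕ) : K)‖ = (p : ℝ)⁻¹ := by
    have h1 : ((p : ℕ) : K) = algebraMap ℚ_[p] K ((p : ℕ) : ℚ_[p]) := (map_natCast _ p).symm
    rw [h1, hK.isometry]
    exact_mod_cast Padic.norm_p
  set r : ℝ := ‖((p : ℕ) : K)‖ with hrdef
  have hr0 : 0 < r := by
    rw [hpK]
    have : (0 : ℝ) < p := by exact_mod_cast hp.pos
    positivity
  have hr1 : r < 1 := by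
    rw [hpK]
    exact inv_lt_one_of_one_lt₀ (by exact_mod_cast hp.one_lt)
  have hqK : ‖((p ^ s : ℕ) : K)‖ ≤ r := by
    have h1 : ((p ^ s : ℕ) : K) = ((p : ℕ) : K) ^ s := by push_cast; ring
    rw [h1, norm_pow, ← hrdef]
    calc r ^ s ≤ r ^ 1 := pow_le_pow_of_le_one hr0.le hr1.le hs
      _ = r := pow_one r
  -- the lift of Frobenius on coordinates
  set Φ : (Fin (N + 1) → K) → Fin (N + 1) → K :=
    fun v i => v i ^ p ^ s + (p : K) * MvPolynomial.eval v (P i) with hΦdef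
  have hΦsmall : ∀ (v : Fin (N + 1) → K), (∀ i, ‖v i‖ ≤ 1) →
      ∀ i, ‖(p : K) * MvPolynomial.eval v (P i)‖ ≤ r := by
    intro v hv i
    rw [norm_mul]
    calc ‖((p : ℕ) : K)‖ * ‖MvPolynomial.eval v (P i)‖ ≤ r * 1 := by
          rw [← hrdef]
          exact mul_le_mul_of_nonneg_left (na_eval_le na _ (hPint i) v hv) hr0.le
      _ = r := mul_one r
  have hΦle : ∀ (v : Fin (N + 1) → K), (∀ i, ‖v i‖ ≤ 1) → ∀ i, ‖Φ v i‖ ≤ 1 := by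
    intro v hv i
    refine na_add_le na ?_ ((hΦsmall v hv i).trans hr1.le)
    rw [norm_pow]
    exact pow_le_one₀ (norm_nonneg _) (hv i)
  have hΦeq1 : ∀ (v : Fin (N + 1) → K), (∀ i, ‖v i‖ ≤ 1) → ∀ i, ‖v i‖ = 1 → ‖Φ v i‖ = 1 := by
    intro v hv i hi
    have h1 : ‖v i ^ p ^ s‖ = 1 := by rw [norm_pow, hi, one_pow]
    have h2 : ‖(p : K) * MvPolynomial.eval v (P i)‖ < ‖v i ^ p ^ s‖ := by
      rw [h1]; exact (hΦsmall v hv i).trans_lt hr1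
    rw [show Φ v i = v i ^ p ^ s + (p : K) * MvPolynomial.eval v (P i) from rfl,
      na_add_eq na h2, h1]
  have hΦdiff : ∀ (v v' : Fin (N + 1) → K), (∀ i, ‖v i‖ ≤ 1) → (∀ i, ‖v' i‖ ≤ 1) →
      ∀ d : ℝ, 0 ≤ d → (∀ i, ‖v i - v' i‖ ≤ d) →
      ∀ i, ‖Φ v i - Φ v' i‖ ≤ max r d * d := by
    intro v v' hv hv' d hd hvv i
    have hid : Φ v i - Φ v' i = (v i ^ p ^ s - v' i ^ p ^ s)
        + (p : K) * (MvPolynomial.eval v (P i) - MvPolynomial.eval v' (P i)) := by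
      show (v i ^ p ^ s + (p : K) * MvPolynomial.eval v (P i))
        - (v' i ^ p ^ s + (p : K) * MvPolynomial.eval v' (P i)) = _
      ring
    rw [hid]
    refine na_add_le na ?_ ?_
    · refine (na_pow_sub_pow_strong na (hv i) (hv' i) (hvv i) (p ^ s)).trans ?_
      exact mul_le_mul_of_nonneg_right (max_le_max hqK le_rfl) hd
    · rw [norm_mul]
      calc ‖((p : ℕ) : K)‖ * ‖MvPolynomial.eval v (P i) - MvPolynomial.eval v' (P i)‖
          ≤ r * d := by
            rw [← hrdef]
            exact mul_le_mul_of_nonneg_left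
              (na_eval_sub na _ (hPint i) v v' hv hv' hd hvv) hr0.le
        _ ≤ max r d * d := mul_le_mul_of_nonneg_right (le_max_left _ _) hd
  have hΦres : ∀ (v : Fin (N + 1) → K), (∀ i, ‖v i‖ ≤ 1) →
      ∀ i, ρ (Φ v i) = (ρ (v i)) ^ p ^ s := by
    intro v hv i
    have h1 : ‖v i ^ p ^ s‖ ≤ 1 := by
      rw [norm_pow]; exact pow_le_one₀ (norm_nonneg _) (hv i)
    have h2 : ‖(p : K) * MvPolynomial.eval v (P i)‖ ≤ 1 := (hΦsmall v hv i).trans hr1.le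
    show resO O hO res (v i ^ p ^ s + (p : K) * MvPolynomial.eval v (P i)) = _
    rw [resO_add na h1 h2, resO_pow (hv i),
      (resO_eq_zero_iff hres_ker h2).2 ((hΦsmall v hv i).trans_lt hr1), add_zero]
  -- now fix y and normalize a representative
  intro y
  set w0 : Fin (N + 1) → kbar := y.rep with hw0def
  have hw0 : w0 ≠ 0 := y.rep_nonzero
  obtain ⟨i₀, hi₀⟩ := Function.ne_iff.1 hw0
  have hi₀' : w0 i₀ ≠ 0 := by simpa using hi₀
  set w : Fin (N + 1) → kbar := fun i => (w0 i₀)⁻¹ * w0 i with hwdef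
  have hwi₀ : w i₀ = 1 := inv_mul_cancel₀ hi₀'
  have hwne : w ≠ 0 := by
    intro h
    have := congrFun h i₀
    rw [hwi₀] at this
    exact one_ne_zero this
  have hyw : y = Projectivization.mk kbar w hwne := by
    conv_lhs => rw [← Projectivization.mk_rep y]
    rw [Projectivization.mk_eq_mk_iff]
    refine ⟨Units.mk0 (w0 i₀) hi₀', ?_⟩
    funext i
    show w0 i₀ * ((w0 i₀)⁻¹ * w0 i) = w0 i
    field_simp
  -- lift w to integral coordinates
  have hlift : ∀ i, ∃ z : K, ‖z‖ ≤ 1 ∧ ρ z = w i := by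
    intro i
    obtain ⟨z, hz⟩ := hres_surj (w i)
    exact ⟨(z : K), (hO _).1 z.2, by rw [hρdef, resO_coe]; exact hz⟩
  choose lv hlvle hlvres using hlift
  set tv : Fin (N + 1) → K := fun i => if i = i₀ then 1 else lv i with htvdef
  have htvle : ∀ i, ‖tv i‖ ≤ 1 := by
    intro i
    show ‖if i = i₀ then 1 else lv i‖ ≤ 1
    split_ifs
    · simp
    · exact hlvle i
  have htvi₀ : tv i₀ = 1 := if_pos rfl
  have htvres : ∀ i, ρ (tv i) = w i := by
    intro i
    show ρ (if i = i₀ then 1 else lv i) = w i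
    split_ifs with h
    · rw [h, hwi₀, hρdef]; exact resO_one
    · exact hlvres i
  -- the "good" representatives
  set Bp : (Fin (N + 1) → K) → Prop := fun v => v i₀ = 1 ∧ ∀ i, ‖v i‖ ≤ 1 with hBpdef
  have hBne : ∀ v, Bp v → v ≠ 0 := by
    intro v hv h
    have h1 := hv.1
    rw [h] at h1
    exact one_ne_zero h1.symm
  have hΦi₀ : ∀ v, Bp v → ‖Φ v i₀‖ = 1 := by
    intro v hv
    exact hΦeq1 v hv.2 i₀ (by rw [hv.1, norm_one])
  have hΦne : ∀ v, Bp v → Φ v i₀ ≠ 0 := by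
    intro v hv h
    have := hΦi₀ v hv
    rw [h, norm_zero] at this
    exact zero_ne_one this
  set G : (Fin (N + 1) → K) → Fin (N + 1) → K := fun v => (Φ v i₀)⁻¹ • Φ v with hGdef
  have hGapp : ∀ v i, G v i = (Φ v i₀)⁻¹ * Φ v i := fun v i => rfl
  have hGB : ∀ v, Bp v → Bp (G v) := by
    intro v hv
    constructor
    · rw [hGapp, inv_mul_cancel₀ (hΦne v hv)]
    · intro i
      rw [hGapp, norm_mul, norm_inv, hΦi₀ v hv, inv_one, one_mul]
      exact hΦle v hv.2 i
  have hGiterB : ∀ k v, Bp v → Bp (G^[k] v) := by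
    intro k
    induction k with
    | zero => intro v hv; simpa using hv
    | succ k ih =>
      intro v hv
      rw [Function.iterate_succ_apply']
      exact hGB _ (ih v hv)
  have hGres : ∀ v, Bp v → ∀ i, ρ (G v i) = (ρ (v i)) ^ p ^ s := by
    intro v hv i
    have h1 : ‖(Φ v i₀)⁻¹‖ ≤ 1 := by rw [norm_inv, hΦi₀ v hv, inv_one]
    rw [hGapp, hρdef, resO_mul h1 (hΦle v hv.2 i), resO_inv (hΦi₀ v hv)]
    have h2 : resO O hO res (Φ v i₀) = 1 := by
      have := hΦres v hv.2 i₀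
      rw [hρdef] at this
      rw [this, hv.1, resO_one, one_pow]
    rw [h2, inv_one, one_mul]
    exact hΦres v hv.2 i
  have hGstep : ∀ v v', Bp v → Bp v' → ∀ d : ℝ, 0 ≤ d → (∀ i, ‖v i - v' i‖ ≤ d) →
      ∀ i, ‖G v i - G v' i‖ ≤ max r d * d := by
    intro v v' hv hv' d hd hvv i
    have hα : ‖Φ v i₀‖ = 1 := hΦi₀ v hv
    have hβ : ‖Φ v' i₀‖ = 1 := hΦi₀ v' hv'
    have hα0 : Φ v i₀ ≠ 0 := hΦne v hv
    have hβ0 : Φ v' i₀ ≠ 0 := hΦne v' hv'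
    have hid : (Φ v i₀)⁻¹ * Φ v i - (Φ v' i₀)⁻¹ * Φ v' i
        = (Φ v i₀)⁻¹ * ((Φ v' i₀)⁻¹ * ((Φ v' i₀) * (Φ v i - Φ v' i)
            + ((Φ v' i₀) - (Φ v i₀)) * Φ v' i)) := by
      field_simp
      ring
    rw [hGapp, hGapp, hid, norm_mul, norm_inv, hα, inv_one, one_mul, norm_mul, norm_inv,
      hβ, inv_one, one_mul]
    refine na_add_le na ?_ ?_
    · rw [norm_mul, hβ, one_mul]
      exact hΦdiff v v' hv.2 hv'.2 d hd hvv i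
    · rw [norm_mul]
      calc ‖Φ v' i₀ - Φ v i₀‖ * ‖Φ v' i‖ ≤ (max r d * d) * 1 := by
            refine mul_le_mul ?_ (hΦle v' hv'.2 i) (norm_nonneg _)
              (mul_nonneg (le_trans hr0.le (le_max_left _ _)) hd)
            rw [norm_sub_rev]
            exact hΦdiff v v' hv.2 hv'.2 d hd hvv i₀
        _ = max r d * d := mul_one _
  have hGiter : ∀ d : ℝ, 0 ≤ d → d ≤ 1 → ∀ k v v', Bp v → Bp v' →
      (∀ i, ‖v i - v' i‖ ≤ d) →
      ∀ i, ‖G^[k] v i - G^[k] v' i‖ ≤ (max r d) ^ k * d := by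
    intro d hd0 hd1
    have hc1 : max r d ≤ 1 := max_le hr1.le hd1
    have hc0 : 0 ≤ max r d := le_trans hr0.le (le_max_left _ _)
    intro k
    induction k with
    | zero => intro v v' _ _ hvv i; simpa using hvv i
    | succ k ih =>
      intro v v' hv hv' hvv i
      rw [Function.iterate_succ_apply', Function.iterate_succ_apply']
      have hk : ∀ j, ‖G^[k] v j - G^[k] v' j‖ ≤ (max r d) ^ k * d :=
        fun j => ih v v' hv hv' hvv j
      have hstep := hGstep (G^[k] v) (G^[k] v') (hGiterB k v hv) (hGiterB k v' hv')
        ((max r d) ^ k * d) (mul_nonneg (pow_nonneg hc0 k) hd0) hk i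
      refine hstep.trans ?_
      have h1 : (max r d) ^ k * d ≤ d :=
        mul_le_of_le_one_left hd0 (pow_le_one₀ hc0 hc1)
      have h2 : max r ((max r d) ^ k * d) ≤ max r d :=
        max_le (le_max_left _ _) (h1.trans (le_max_right _ _))
      calc max r ((max r d) ^ k * d) * ((max r d) ^ k * d)
          ≤ max r d * ((max r d) ^ k * d) :=
            mul_le_mul_of_nonneg_right h2 (mul_nonneg (pow_nonneg hc0 k) hd0)
        _ = (max r d) ^ (k + 1) * d := by ring
  have hGresIter : ∀ k v, Bp v → ∀ i, ρ (G^[k] v i) = (ρ (v i)) ^ p ^ (s * k) := by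
    intro k
    induction k with
    | zero => intro v hv i; simp
    | succ k ih =>
      intro v hv i
      rw [Function.iterate_succ_apply', hGres _ (hGiterB k v hv) i, ih v hv i,
        ← pow_mul, ← pow_add]
      have hexp : s * k + s = s * (k + 1) := by ring
      rw [hexp]
  -- Frobenius period of w
  have hpowfix : ∀ (a : kbar) (m' : ℕ), a ^ p ^ m' = a → ∀ t, a ^ p ^ (m' * t) = a := by
    intro a m' hfix t
    induction t with
    | zero => simp
    | succ t ih => rw [Nat.mul_succ, pow_add, pow_mul, ih, hfix]
  obtain ⟨m, hm1, hmfix⟩ : ∃ m : Fin (N + 1) → ℕ, (∀ i, 1 ≤ m i) ∧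
      ∀ i, (w i) ^ p ^ (m i) = w i := by
    have h := fun i => residue_pow_p_fixed hK O hO res hres_surj hres_ker (w i)
    choose m h1 h2 using h
    exact ⟨m, h1, h2⟩
  set n : ℕ := ∏ i, m i with hndef
  have hn1 : 1 ≤ n := Finset.one_le_prod' fun i _ => hm1 i
  have hfrob : ∀ i, (w i) ^ p ^ (s * n) = w i := by
    intro i
    obtain ⟨t, ht⟩ : m i ∣ s * n :=
      dvd_mul_of_dvd_right (Finset.dvd_prod_of_mem m (Finset.mem_univ i)) s
    rw [ht]
    exact hpowfix (w i) (m i) (hmfix i) t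
  have hHres : ∀ v, Bp v → (∀ i, ρ (v i) = w i) → ∀ i, ρ (G^[n] v i) = w i := by
    intro v hv hres i
    rw [hGresIter n v hv i, hres i, hfrob i]
  -- the contraction setup
  have htvB : Bp tv := ⟨htvi₀, htvle⟩
  set d₀ : ℝ := ‖G^[n] tv - tv‖ with hd₀def
  have hd₀0 : 0 ≤ d₀ := norm_nonneg _
  have hd₀c : ∀ i, ‖G^[n] tv i - tv i‖ ≤ d₀ := by
    intro i
    have := norm_le_pi_norm (G^[n] tv - tv) i
    rwa [Pi.sub_apply] at this
  have hd₀1 : d₀ < 1 := by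
    rw [hd₀def, pi_norm_lt_iff zero_lt_one]
    intro i
    rw [Pi.sub_apply]
    refine (resO_eq_iff (hO := hO) hres_ker na ((hGiterB n tv htvB).2 i) (htvle i)).1 ?_
    have h1 := hHres tv htvB htvres i
    have h2 := htvres i
    rw [hρdef] at h1 h2
    rw [h1, h2]
  set c : ℝ := max r d₀ with hcdef
  have hc0 : 0 < c := lt_of_lt_of_le hr0 (le_max_left _ _)
  have hc1 : c < 1 := max_lt hr1 hd₀1
  set E : Set (Fin (N + 1) → K) := {v | v i₀ = 1 ∧ ∀ i, ‖v i - tv i‖ ≤ d₀} with hEdef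
  have hEB : ∀ v ∈ E, Bp v ∧ ∀ i, ρ (v i) = w i := by
    intro v hv
    have hle : ∀ i, ‖v i‖ ≤ 1 := by
      intro i
      have h1 : v i = tv i + (v i - tv i) := by ring
      rw [h1]
      exact na_add_le na (htvle i) ((hv.2 i).trans hd₀1.le)
    refine ⟨⟨hv.1, hle⟩, fun i => ?_⟩
    rw [← htvres i, hρdef]
    exact (resO_eq_iff (hO := hO) hres_ker na (hle i) (htvle i)).2 ((hv.2 i).trans_lt hd₀1)
  have hEmap : ∀ v ∈ E, G^[n] v ∈ E := by
    intro v hv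
    obtain ⟨hvB, _⟩ := hEB v hv
    refine ⟨(hGiterB n v hvB).1, fun i => ?_⟩
    have h2 := hGiter d₀ hd₀0 hd₀1.le n v tv hvB htvB hv.2 i
    have h3 : G^[n] v i - tv i = (G^[n] v i - G^[n] tv i) + (G^[n] tv i - tv i) := by ring
    rw [h3]
    refine na_add_le na (h2.trans ?_) (hd₀c i)
    rw [← hcdef]
    exact mul_le_of_le_one_left hd₀0 (pow_le_one₀ hc0.le hc1.le)
  have hEclosed : IsClosed E := by
    have h1 : E = ((fun v : Fin (N + 1) → K => v i₀) ⁻¹' {1})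
        ∩ ⋂ i, {v : Fin (N + 1) → K | ‖v i - tv i‖ ≤ d₀} := by
      ext v
      simp only [hEdef, Set.mem_setOf_eq, Set.mem_inter_iff, Set.mem_preimage,
        Set.mem_singleton_iff, Set.mem_iInter]
    rw [h1]
    refine IsClosed.inter (IsClosed.preimage (continuous_apply i₀) isClosed_singleton)
      (isClosed_iInter fun i => ?_)
    exact isClosed_le (Continuous.norm ((continuous_apply i).sub continuous_const))
      continuous_const
  have htvE : tv ∈ E := ⟨htvi₀, fun i => by rw [sub_self, norm_zero]; exact hd₀0⟩
  haveI : CompleteSpace ↥E := hEclosed.completeSpace_coe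
  haveI : Nonempty ↥E := ⟨⟨tv, htvE⟩⟩
  set g : ↥E → ↥E := fun v => ⟨G^[n] v.1, hEmap v.1 v.2⟩ with hgdef
  have hcontr : ContractingWith ⟨c, hc0.le⟩ g := by
    constructor
    · exact_mod_cast hc1
    · refine LipschitzWith.of_dist_le_mul fun a b => ?_
      rw [Subtype.dist_eq (g a) (g b), Subtype.dist_eq a b, dist_eq_norm, dist_eq_norm]
      show ‖G^[n] a.1 - G^[n] b.1‖ ≤ c * ‖a.1 - b.1‖
      have hcoord : ∀ i, ‖a.1 i - b.1 i‖ ≤ ‖a.1 - b.1‖ := by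
        intro i
        have := norm_le_pi_norm (a.1 - b.1) i
        rwa [Pi.sub_apply] at this
      have heled : ‖a.1 - b.1‖ ≤ d₀ := by
        rw [pi_norm_le_iff_of_nonneg hd₀0]
        intro i
        rw [Pi.sub_apply]
        have h1 : a.1 i - b.1 i = (a.1 i - tv i) + (tv i - b.1 i) := by ring
        rw [h1]
        refine na_add_le na (a.2.2 i) ?_
        rw [norm_sub_rev]
        exact b.2.2 i
      have he0 : (0 : ℝ) ≤ ‖a.1 - b.1‖ := norm_nonneg _
      have h2 := hGiter ‖a.1 - b.1‖ he0 (heled.trans hd₀1.le) n a.1 b.1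
        (hEB _ a.2).1 (hEB _ b.2).1 hcoord
      have h3 : max r ‖a.1 - b.1‖ ≤ c := by
        rw [hcdef]
        exact max_le (le_max_left _ _) (heled.trans (le_max_right _ _))
      have h4 : (max r ‖a.1 - b.1‖) ^ n ≤ c := by
        calc (max r ‖a.1 - b.1‖) ^ n ≤ c ^ n :=
              pow_le_pow_left₀ (le_trans hr0.le (le_max_left _ _)) h3 n
          _ ≤ c ^ 1 := pow_le_pow_of_le_one hc0.le hc1.le hn1
          _ = c := pow_one c
      rw [pi_norm_le_iff_of_nonneg (mul_nonneg hc0.le he0)]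
      intro i
      rw [Pi.sub_apply]
      exact (h2 i).trans (mul_le_mul_of_nonneg_right h4 he0)
  set vstar : ↥E := ContractingWith.fixedPoint g hcontr with hvstardef
  have hfix : G^[n] vstar.1 = vstar.1 := congrArg Subtype.val hcontr.fixedPoint_isFixedPt
  have hvstarB : Bp vstar.1 := (hEB _ vstar.2).1
  have hvstarres : ∀ i, ρ (vstar.1 i) = w i := (hEB _ vstar.2).2
  -- projective bookkeeping
  have hmkG : ∀ (v : Fin (N + 1) → K) (hvB : Bp v) (hv : v ≠ 0),
      F (Projectivization.mk K v hv) = Projectivization.mk K (G v) (hBne _ (hGB v hvB)) := by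
    intro v hvB hv
    rw [hF v hv]
    refine (Projectivization.mk_eq_mk_iff K _ _ _ _).mpr
      ⟨Units.mk0 (Φ v i₀) (hΦne v hvB), ?_⟩
    funext i
    show Φ v i₀ * ((Φ v i₀)⁻¹ * Φ v i) = Φ v i
    rw [← mul_assoc, mul_inv_cancel₀ (hΦne v hvB), one_mul]
  have hmkGk : ∀ (k : ℕ) (v : Fin (N + 1) → K) (hvB : Bp v) (hv : v ≠ 0),
      F^[k] (Projectivization.mk K v hv)
        = Projectivization.mk K (G^[k] v) (hBne _ (hGiterB k v hvB)) := by
    intro k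
    induction k with
    | zero => intro v hvB hv; rfl
    | succ k ih =>
      intro v hvB hv
      rw [Function.iterate_succ_apply', ih v hvB hv,
        hmkG (G^[k] v) (hGiterB k v hvB) (hBne _ (hGiterB k v hvB))]
      refine (Projectivization.mk_eq_mk_iff K _ _ _ _).mpr ⟨1, ?_⟩
      rw [one_smul, Function.iterate_succ_apply']
  -- every point of the fiber has a normalized representative
  have hnormrep : ∀ x, RedTo O hO res x y → ∃ (v : Fin (N + 1) → K) (hv : v ≠ 0),
      Bp v ∧ (∀ i, ρ (v i) = w i) ∧ x = Projectivization.mk K v hv := by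
    intro x hx
    obtain ⟨u, hu_ne, hule, ⟨i₁, hu1⟩, hxmk, hw_ne, hymk⟩ := hx
    have hred : ∀ i, ρ (u i) = res ⟨u i, (hO (u i)).mpr (hule i)⟩ :=
      fun i => resO_def (hule i)
    rw [hyw, Projectivization.mk_eq_mk_iff] at hymk
    obtain ⟨a, ha⟩ := hymk
    have ha' : ∀ i, (a : kbar) * ρ (u i) = w i := by
      intro i
      have := congrFun ha i
      rw [hred i]
      simpa [Units.smul_def] using this
    have hui₀ : ‖u i₀‖ = 1 := by
      by_contra h
      have hlt : ‖u i₀‖ < 1 := lt_of_le_of_ne (hule i₀) h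
      have h0 : ρ (u i₀) = 0 := by
        rw [hρdef]
        exact (resO_eq_zero_iff hres_ker (hule i₀)).2 hlt
      have h1 := ha' i₀
      rw [h0, mul_zero, hwi₀] at h1
      exact zero_ne_one h1
    have hu0 : u i₀ ≠ 0 := by
      intro h
      rw [h, norm_zero] at hui₀
      exact zero_ne_one hui₀
    set v : Fin (N + 1) → K := (u i₀)⁻¹ • u with hvdef
    have hvi₀ : v i₀ = 1 := by
      show (u i₀)⁻¹ * u i₀ = 1
      exact inv_mul_cancel₀ hu0
    have hvle : ∀ i, ‖v i‖ ≤ 1 := by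
      intro i
      show ‖(u i₀)⁻¹ * u i‖ ≤ 1
      rw [norm_mul, norm_inv, hui₀, inv_one, one_mul]
      exact hule i
    have hv_ne : v ≠ 0 := by
      intro h
      have h1 := hvi₀
      rw [h] at h1
      exact one_ne_zero h1.symm
    have hinv1 : ‖(u i₀)⁻¹‖ ≤ 1 := by rw [norm_inv, hui₀, inv_one]
    have haiv : ρ (u i₀) = (a : kbar)⁻¹ := by
      have h1 := ha' i₀
      rw [hwi₀] at h1
      field_simp
      rw [mul_comm]
      exact h1
    have hvres : ∀ i, ρ (v i) = w i := by
      intro i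
      show ρ ((u i₀)⁻¹ * u i) = w i
      rw [hρdef, resO_mul hinv1 (hule i), resO_inv hui₀]
      rw [← hρdef, haiv, inv_inv]
      exact ha' i
    refine ⟨v, hv_ne, ⟨hvi₀, hvle⟩, hvres, ?_⟩
    rw [hxmk, Projectivization.mk_eq_mk_iff]
    refine ⟨Units.mk0 (u i₀) hu0, ?_⟩
    funext i
    show u i₀ * ((u i₀)⁻¹ * u i) = u i
    rw [← mul_assoc, mul_inv_cancel₀ hu0, one_mul]
  -- periodic points have G-fixed representatives
  have hperfix : ∀ x (v : Fin (N + 1) → K) (hv : v ≠ 0), Bp v →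
      x = Projectivization.mk K v hv → x ∈ Per → ∃ k, 1 ≤ k ∧ G^[k] v = v := by
    intro x v hv hvB hxv hxPer
    obtain ⟨k, hk1, hkfix⟩ := (hPer x).1 hxPer
    refine ⟨k, hk1, ?_⟩
    rw [hxv, hmkGk k v hvB hv, Projectivization.mk_eq_mk_iff] at hkfix
    obtain ⟨a, ha⟩ := hkfix
    have hai₀ : (a : K) * v i₀ = (G^[k] v) i₀ := by
      have := congrFun ha i₀
      simpa [Units.smul_def] using this
    rw [hvB.1, mul_one, (hGiterB k v hvB).1] at hai₀
    calc G^[k] v = a • v := ha.symm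
      _ = v := by
        funext i
        show (a : K) * v i = v i
        rw [hai₀, one_mul]
  -- uniqueness of the G-periodic point in a residue disc
  have huniq : ∀ v v', Bp v → Bp v' → (∀ i, ρ (v i) = w i) → (∀ i, ρ (v' i) = w i) →
      (∃ k, 1 ≤ k ∧ G^[k] v = v) → (∃ k', 1 ≤ k' ∧ G^[k'] v' = v') → v = v' := by
    intro v v' hvB hv'B hvres hv'res hkf hk'f
    obtain ⟨k, hk1, hkf⟩ := hkf
    obtain ⟨k', hk'1, hk'f⟩ := hk'f
    by_contra hne
    set e : ℝ := ‖v - v'‖ with hedef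
    have he0 : 0 < e := by
      rw [hedef, norm_pos_iff]
      exact sub_ne_zero.2 hne
    have he1 : e < 1 := by
      rw [hedef, pi_norm_lt_iff zero_lt_one]
      intro i
      rw [Pi.sub_apply]
      refine (resO_eq_iff (hO := hO) hres_ker na (hvB.2 i) (hv'B.2 i)).1 ?_
      have h1 := hvres i
      have h2 := hv'res i
      rw [hρdef] at h1 h2
      rw [h1, h2]
    have hcoord : ∀ i, ‖v i - v' i‖ ≤ e := by
      intro i
      have := norm_le_pi_norm (v - v') i
      rwa [Pi.sub_apply] at this
    set M : ℕ := k * k' with hMdef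
    have hM1 : 1 ≤ M := Nat.one_le_iff_ne_zero.2 (Nat.mul_ne_zero (by omega) (by omega))
    have hMv : G^[M] v = v := by
      rw [hMdef, Function.iterate_mul]
      exact Function.iterate_fixed hkf k'
    have hMv' : G^[M] v' = v' := by
      rw [hMdef, mul_comm, Function.iterate_mul]
      exact Function.iterate_fixed hk'f k
    have hcon := hGiter e he0.le he1.le M v v' hvB hv'B hcoord
    rw [hMv, hMv'] at hcon
    have hle : e ≤ (max r e) ^ M * e := by
      rw [hedef, pi_norm_le_iff_of_nonneg
        (mul_nonneg (pow_nonneg (le_trans hr0.le (le_max_left _ _)) M) he0.le)]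
      intro i
      rw [Pi.sub_apply]
      exact hcon i
    have hlt : (max r e) ^ M * e < e := by
      have h1 : max r e < 1 := max_lt hr1 he1
      have h2 : (max r e) ^ M < 1 :=
        pow_lt_one₀ (le_trans hr0.le (le_max_left _ _)) h1 (by omega)
      calc (max r e) ^ M * e < 1 * e := mul_lt_mul_of_pos_right h2 he0
        _ = e := one_mul e
    exact absurd hle (not_le.2 hlt)
  -- assemble the unique periodic point in the fiber
  set xstar : ℙ K (Fin (N + 1) → K) := Projectivization.mk K vstar.1 (hBne _ hvstarB)
    with hxstardef
  have hxPer : xstar ∈ Per := by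
    rw [hPer]
    refine ⟨n, hn1, ?_⟩
    rw [hxstardef, hmkGk n vstar.1 hvstarB (hBne _ hvstarB)]
    exact (Projectivization.mk_eq_mk_iff K _ _ _ _).mpr ⟨1, by rw [one_smul, hfix]⟩
  have hresfun : (fun i => res ⟨vstar.1 i, (hO (vstar.1 i)).mpr (hvstarB.2 i)⟩) = w := by
    funext i
    rw [← resO_def (hO := hO) (hvstarB.2 i), ← hρdef]
    exact hvstarres i
  have hxRed : RedTo O hO res xstar y := by
    refine ⟨vstar.1, hBne _ hvstarB, hvstarB.2,
      ⟨i₀, by rw [hvstarB.1, norm_one]⟩, rfl, ?_, ?_⟩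
    · rw [hresfun]; exact hwne
    · rw [hyw]
      exact (Projectivization.mk_eq_mk_iff kbar _ _ _ _).mpr
        ⟨1, by rw [one_smul, hresfun]⟩
  refine ⟨xstar, ⟨hxPer, hxRed⟩, ?_⟩
  rintro x' ⟨hx'Per, hx'Red⟩
  obtain ⟨v', hv'ne, hv'B, hv'res, hx'v⟩ := hnormrep x' hx'Red
  have hfix' := hperfix x' v' hv'ne hv'B hx'v hx'Per
  have hveq := huniq v' vstar.1 hv'B hvstarB hv'res hvstarres hfix' ⟨n, hn1, hfix⟩
  rw [hx'v, hxstardef]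
  exact (Projectivization.mk_eq_mk_iff K _ _ _ _).mpr ⟨1, by rw [one_smul, hveq]⟩
end

section
/- With F a lift of Frobenius on ℙ^N defined over ℤ_p and σ a Galois lift of the q-power Frobenius, the set of F-periodic points in ℙ^N(overline{ℚ_p}) equals the equalizer of F and σ: Per = {x ∈ ℙ^N(overline{ℚ_p}) : F(x) = σ(x)}, where σ acts on ℙ^N(overline{ℚ_p}) coordinatewise. -/
open scoped LinearAlgebra.Projectivization
open MvPolynomial

namespace MSAux

/-! ### Generic nonarchimedean absolute value lemmas -/

theorem vsum {K : Type*} [Field K] (v : AbsoluteValue K ℝ)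
    (hna : ∀ x y : K, v (x + y) ≤ max (v x) (v y))
    {ι : Type*} (S : Finset ι) (f : ι → K) {B : ℝ} (hB : 0 ≤ B)
    (h : ∀ i ∈ S, v (f i) ≤ B) : v (∑ i ∈ S, f i) ≤ B := by
  classical
  induction S using Finset.induction_on with
  | empty => simpa using hB
  | @insert j S' hj ih =>
      rw [Finset.sum_insert hj]
      exact le_trans (hna _ _) (max_le (h _ (Finset.mem_insert_self _ _))
        (ih fun i hi => h i (Finset.mem_insert_of_mem hi)))

theorem vsub {K : Type*} [Field K] (v : AbsoluteValue K ℝ)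
    (hna : ∀ x y : K, v (x + y) ≤ max (v x) (v y))
    (x y : K) : v (x - y) ≤ max (v x) (v y) := by
  have := hna x (-y)
  simpa [sub_eq_add_neg] using this

theorem viso {K : Type*} [Field K] (v : AbsoluteValue K ℝ)
    (hna : ∀ x y : K, v (x + y) ≤ max (v x) (v y))
    {x y : K} (h : v y < v x) : v (x + y) = v x := by
  refine le_antisymm ((hna x y).trans (by rw [max_eq_left h.le])) ?_
  have h2 : v x ≤ max (v (x + y)) (v y) := by
    have := hna (x + y) (-y)
    simpa using this
  rcases max_cases (v (x + y)) (v y) with ⟨he, _⟩ | ⟨he, _⟩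
  · rwa [he] at h2
  · rw [he] at h2; exact absurd (lt_of_lt_of_le h h2) (lt_irrefl _)

theorem vprod_le_one {K : Type*} [Field K] (v : AbsoluteValue K ℝ)
    {ι : Type*} (S : Finset ι) (b : ι → K) (hb : ∀ i, v (b i) ≤ 1) :
    v (∏ i ∈ S, b i) ≤ 1 := by
  rw [map_prod]
  exact Finset.prod_le_one (fun i _ => v.nonneg _) (fun i _ => hb i)

theorem vprod_sub {K : Type*} [Field K] (v : AbsoluteValue K ℝ)
    (hna : ∀ x y : K, v (x + y) ≤ max (v x) (v y))
    {ι : Type*} (S : Finset ι) (a b : ι → K) {δ : ℝ} (hδ : 0 ≤ δ)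
    (ha : ∀ i, v (a i) ≤ 1) (hb : ∀ i, v (b i) ≤ 1)
    (hab : ∀ i, v (a i - b i) ≤ δ) :
    v (∏ i ∈ S, a i - ∏ i ∈ S, b i) ≤ δ := by
  classical
  induction S using Finset.induction_on with
  | empty => simpa using hδ
  | @insert j S' hj ih =>
      rw [Finset.prod_insert hj, Finset.prod_insert hj]
      have key : a j * ∏ i ∈ S', a i - b j * ∏ i ∈ S', b i
          = a j * (∏ i ∈ S', a i - ∏ i ∈ S', b i) + (a j - b j) * ∏ i ∈ S', b i := by
        ring
      rw [key]
      refine le_trans (hna _ _) (max_le ?_ ?_)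
      · rw [map_mul]
        calc v (a j) * v (∏ i ∈ S', a i - ∏ i ∈ S', b i) ≤ 1 * δ :=
              mul_le_mul (ha j) ih (v.nonneg _) zero_le_one
          _ = δ := one_mul δ
      · rw [map_mul]
        calc v (a j - b j) * v (∏ i ∈ S', b i) ≤ δ * 1 :=
              mul_le_mul (hab j) (vprod_le_one v S' b hb) (v.nonneg _) hδ
          _ = δ := mul_one δ

theorem vpow_sub {K : Type*} [Field K] (v : AbsoluteValue K ℝ)
    (hna : ∀ x y : K, v (x + y) ≤ max (v x) (v y))
    {a b : K} (ha : v a ≤ 1) (hb : v b ≤ 1) (n : ℕ) :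
    v (a ^ n - b ^ n) ≤ v (a - b) := by
  have := vprod_sub v hna (Finset.range n) (fun _ => a) (fun _ => b)
    (v.nonneg (a - b)) (fun _ => ha) (fun _ => hb) (fun _ => le_rfl)
  simpa using this

theorem veval_le {K : Type*} [Field K] (v : AbsoluteValue K ℝ)
    (hna : ∀ x y : K, v (x + y) ≤ max (v x) (v y))
    {N : ℕ} (P : MvPolynomial (Fin (N + 1)) K)
    (hP : ∀ m, v (P.coeff m) ≤ 1) (w : Fin (N + 1) → K) (hw : ∀ i, v (w i) ≤ 1) :
    v (eval w P) ≤ 1 := by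
  rw [eval_eq']
  refine vsum v hna _ _ zero_le_one (fun d _ => ?_)
  rw [map_mul]
  calc v (coeff d P) * v (∏ i, w i ^ d i) ≤ 1 * 1 :=
        mul_le_mul (hP d) (vprod_le_one v _ _ (fun i => by
          rw [map_pow]; exact pow_le_one₀ (v.nonneg _) (hw i))) (v.nonneg _) zero_le_one
    _ = 1 := one_mul 1

theorem veval_sub {K : Type*} [Field K] (v : AbsoluteValue K ℝ)
    (hna : ∀ x y : K, v (x + y) ≤ max (v x) (v y))
    {N : ℕ} (P : MvPolynomial (Fin (N + 1)) K)
    (hP : ∀ m, v (P.coeff m) ≤ 1) (w u : Fin (N + 1) → K)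
    (hw : ∀ i, v (w i) ≤ 1) (hu : ∀ i, v (u i) ≤ 1)
    {δ : ℝ} (hδ : 0 ≤ δ) (hwu : ∀ i, v (w i - u i) ≤ δ) :
    v (eval w P - eval u P) ≤ δ := by
  rw [eval_eq', eval_eq', ← Finset.sum_sub_distrib]
  refine vsum v hna _ _ hδ (fun d _ => ?_)
  have : coeff d P * ∏ i, w i ^ d i - coeff d P * ∏ i, u i ^ d i
      = coeff d P * (∏ i, w i ^ d i - ∏ i, u i ^ d i) := by ring
  rw [this, map_mul]
  have hprod : v (∏ i, w i ^ d i - ∏ i, u i ^ d i) ≤ δ := by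
    refine vprod_sub v hna Finset.univ (fun i => w i ^ d i) (fun i => u i ^ d i) hδ
      (fun i => by rw [map_pow]; exact pow_le_one₀ (v.nonneg _) (hw i))
      (fun i => by rw [map_pow]; exact pow_le_one₀ (v.nonneg _) (hu i))
      (fun i => le_trans (vpow_sub v hna (hw i) (hu i) (d i)) (hwu i))
  calc v (coeff d P) * v (∏ i, w i ^ d i - ∏ i, u i ^ d i) ≤ 1 * δ :=
        mul_le_mul (hP d) hprod (v.nonneg _) zero_le_one
    _ = δ := one_mul δ

/-! ### `p`-adic specific lemmas -/

variable {p : ℕ} [Fact p.Prime]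

theorem vnat (v : AbsoluteValue (AlgebraicClosure ℚ_[p]) ℝ)
    (hv : ∀ a : ℚ_[p], v (algebraMap ℚ_[p] (AlgebraicClosure ℚ_[p]) a) = ‖a‖)
    (n : ℕ) : v (n : AlgebraicClosure ℚ_[p]) ≤ 1 := by
  have := hv (n : ℚ_[p])
  rw [map_natCast (algebraMap ℚ_[p] (AlgebraicClosure ℚ_[p])) n] at this
  rw [this]
  exact_mod_cast Padic.norm_int_le_one (n : ℤ)

theorem vp_lt_one (v : AbsoluteValue (AlgebraicClosure ℚ_[p]) ℝ)
    (hv : ∀ a : ℚ_[p], v (algebraMap ℚ_[p] (AlgebraicClosure ℚ_[p]) a) = ‖a‖) :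
    v (p : AlgebraicClosure ℚ_[p]) < 1 := by
  have := hv (p : ℚ_[p])
  rw [map_natCast (algebraMap ℚ_[p] (AlgebraicClosure ℚ_[p])) p] at this
  rw [this, Padic.norm_p]
  have hp2 : (2 : ℝ) ≤ (p : ℝ) := by exact_mod_cast (Fact.out : p.Prime).two_le
  rw [inv_lt_one_iff₀]
  right; linarith

/-- The key Frobenius estimate: `v (a^q - b^q) ≤ max ((v (a-b))^q) (v p * v (a-b))`. -/
theorem vfrob (v : AbsoluteValue (AlgebraicClosure ℚ_[p]) ℝ)
    (hna : ∀ x y : AlgebraicClosure ℚ_[p], v (x + y) ≤ max (v x) (v y))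
    (hv : ∀ a : ℚ_[p], v (algebraMap ℚ_[p] (AlgebraicClosure ℚ_[p]) a) = ‖a‖)
    {s : ℕ} (hs : 1 ≤ s) {a b : AlgebraicClosure ℚ_[p]} (ha : v a ≤ 1) (hb : v b ≤ 1) :
    v (a ^ p ^ s - b ^ p ^ s) ≤
      max (v (a - b) ^ p ^ s) (v (p : AlgebraicClosure ℚ_[p]) * v (a - b)) := by
  set q := p ^ s with hq
  set δ := v (a - b) with hδdef
  have hδ0 : 0 ≤ δ := v.nonneg _
  have hδ1 : δ ≤ 1 := le_trans (vsub v hna a b) (max_le ha hb)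
  have hB : (0:ℝ) ≤ max (δ ^ q) (v (p : AlgebraicClosure ℚ_[p]) * δ) :=
    le_trans (pow_nonneg hδ0 q) (le_max_left _ _)
  -- binomial expansion of `a^q = ((a-b)+b)^q`
  have hexp : a ^ q - b ^ q
      = ∑ k ∈ Finset.range q, (a - b) ^ (k + 1) * b ^ (q - (k + 1)) * ((q.choose (k + 1) : ℕ) : AlgebraicClosure ℚ_[p]) := by
    have h1 := add_pow (a - b) b q
    rw [sub_add_cancel] at h1
    rw [h1, Finset.sum_range_succ']
    simp [Nat.choose_zero_right]
  rw [hexp]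
  refine vsum v hna _ _ hB (fun k hk => ?_)
  rw [map_mul, map_mul, map_pow, map_pow]
  rcases eq_or_lt_of_le (Nat.succ_le_of_lt (Finset.mem_range.mp hk)) with hkq | hkq
  · -- k + 1 = q : leading term
    rw [← hkq]
    simp only [Nat.choose_self, Nat.cast_one, map_one, mul_one, Nat.sub_self, pow_zero]
    exact le_max_left _ _
  · -- 1 ≤ k + 1 < q : term divisible by p
    obtain ⟨m, hm⟩ := Nat.Prime.dvd_choose_pow (Fact.out : p.Prime)
      (Nat.succ_ne_zero k) (by omega : k + 1 ≠ p ^ s)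
    have hc : ((q.choose (k + 1) : ℕ) : AlgebraicClosure ℚ_[p])
        = (p : AlgebraicClosure ℚ_[p]) * (m : AlgebraicClosure ℚ_[p]) := by
      rw [← hq] at hm; rw [hm]; push_cast; ring
    rw [hc, map_mul]
    have h1 : δ ^ (k + 1) ≤ δ := by
      calc δ ^ (k + 1) ≤ δ ^ 1 := pow_le_pow_of_le_one hδ0 hδ1 (by omega)
        _ = δ := pow_one δ
    have h2 : v b ^ (q - (k + 1)) ≤ 1 := pow_le_one₀ (v.nonneg _) hb
    have h3 : v ((m : ℕ) : AlgebraicClosure ℚ_[p]) ≤ 1 := vnat v hv m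
    have hvp : 0 ≤ v (p : AlgebraicClosure ℚ_[p]) := v.nonneg _
    refine le_trans ?_ (le_max_right _ _)
    calc δ ^ (k + 1) * v b ^ (q - (k + 1)) * (v (p : AlgebraicClosure ℚ_[p]) * v ((m : ℕ) : AlgebraicClosure ℚ_[p]))
        ≤ δ * 1 * (v (p : AlgebraicClosure ℚ_[p]) * 1) := by
          refine mul_le_mul (mul_le_mul h1 h2 (pow_nonneg (v.nonneg _) _) hδ0) ?_ ?_ ?_
          · exact mul_le_mul_of_nonneg_left h3 hvp
          · positivity
          · positivity
      _ = v (p : AlgebraicClosure ℚ_[p]) * δ := by ring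

end MSAux
namespace MSAux

section

variable {p : ℕ} [Fact p.Prime]

local notation "K'" => AlgebraicClosure ℚ_[p]

/-- The coordinate map of the Frobenius lift. -/
noncomputable def Ft {N : ℕ} (q : ℕ) (P : Fin (N + 1) → MvPolynomial (Fin (N + 1)) (AlgebraicClosure ℚ_[p]))
    (w : Fin (N + 1) → AlgebraicClosure ℚ_[p]) : Fin (N + 1) → AlgebraicClosure ℚ_[p] :=
  fun i => w i ^ q + (p : AlgebraicClosure ℚ_[p]) * eval w (P i)

/-- A vector all of whose coordinates are integral, at least one being a unit. -/
def IsUnitVec {N : ℕ} (v : AbsoluteValue (AlgebraicClosure ℚ_[p]) ℝ)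
    (w : Fin (N + 1) → AlgebraicClosure ℚ_[p]) : Prop :=
  (∀ i, v (w i) ≤ 1) ∧ ∃ i, v (w i) = 1

variable {N : ℕ} (v : AbsoluteValue (AlgebraicClosure ℚ_[p]) ℝ)

theorem unit_ne_zero {w : Fin (N + 1) → AlgebraicClosure ℚ_[p]}
    (hw : IsUnitVec v w) : w ≠ 0 := by
  obtain ⟨_, i, hi⟩ := hw
  intro h
  rw [h] at hi
  simp at hi

theorem exists_unit_rep (x : ℙ (AlgebraicClosure ℚ_[p]) (Fin (N + 1) → AlgebraicClosure ℚ_[p])) :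
    ∃ (w : Fin (N + 1) → AlgebraicClosure ℚ_[p]) (hw : w ≠ 0),
      x = Projectivization.mk (AlgebraicClosure ℚ_[p]) w hw ∧ IsUnitVec v w := by
  set u := x.rep with hu
  have hune : u ≠ 0 := x.rep_nonzero
  obtain ⟨i0, _, hi0⟩ := Finset.univ.exists_max_image (fun i => v (u i)) ⟨0, Finset.mem_univ 0⟩
  have hc : u i0 ≠ 0 := by
    obtain ⟨j, hj⟩ := Function.ne_iff.mp hune
    have hj' : (0:ℝ) < v (u j) := v.pos hj
    have := hi0 j (Finset.mem_univ j)
    intro h0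
    rw [h0] at this; simp at this; exact hj this
  refine ⟨fun i => (u i0)⁻¹ * u i, ?_, ?_, ?_, ⟨i0, ?_⟩⟩
  · intro h
    have := congrFun h i0
    simp [inv_mul_cancel₀ hc] at this
  · rw [← Projectivization.mk_rep x, Projectivization.mk_eq_mk_iff]
    exact ⟨Units.mk0 (u i0) hc, funext fun i => by
      show u i0 * ((u i0)⁻¹ * u i) = u i
      field_simp⟩
  · intro i
    rw [map_mul, map_inv₀]
    rw [inv_mul_le_one₀ (v.pos hc)]
    exact hi0 i (Finset.mem_univ i)
  · rw [map_mul, map_inv₀, inv_mul_cancel₀ (ne_of_gt (v.pos hc))]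

end

end MSAux
namespace MSAux

section

variable {p : ℕ} [Fact p.Prime] {N : ℕ}
  (v : AbsoluteValue (AlgebraicClosure ℚ_[p]) ℝ)

theorem le_zero_of_pow {r c X : ℝ} (h0 : 0 ≤ r) (h1 : r < 1)
    (h : ∀ k : ℕ, X ≤ c * r ^ k) : X ≤ 0 := by
  have := (tendsto_pow_atTop_nhds_zero_of_lt_one h0 h1).const_mul c
  rw [mul_zero] at this
  exact ge_of_tendsto' this h

theorem unit_Ft
    (hna : ∀ x y : AlgebraicClosure ℚ_[p], v (x + y) ≤ max (v x) (v y))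
    (hv : ∀ a : ℚ_[p], v (algebraMap ℚ_[p] (AlgebraicClosure ℚ_[p]) a) = ‖a‖)
    (q : ℕ) (hq : 1 ≤ q)
    (P : Fin (N + 1) → MvPolynomial (Fin (N + 1)) (AlgebraicClosure ℚ_[p]))
    (hPc : ∀ i m, v ((P i).coeff m) ≤ 1)
    {w : Fin (N + 1) → AlgebraicClosure ℚ_[p]} (hw : IsUnitVec v w) :
    IsUnitVec v (Ft q P w) := by
  have hvp1 : v (p : AlgebraicClosure ℚ_[p]) < 1 := vp_lt_one v hv
  have hple : ∀ i, v ((p : AlgebraicClosure ℚ_[p]) * eval w (P i)) < 1 := by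
    intro i
    rw [map_mul]
    calc v (p : AlgebraicClosure ℚ_[p]) * v (eval w (P i))
        ≤ v (p : AlgebraicClosure ℚ_[p]) * 1 :=
          mul_le_mul_of_nonneg_left (veval_le v hna (P i) (hPc i) w hw.1) (v.nonneg _)
      _ = v (p : AlgebraicClosure ℚ_[p]) := mul_one _
      _ < 1 := hvp1
  constructor
  · intro i
    refine le_trans (hna _ _) (max_le ?_ (hple i).le)
    rw [map_pow]
    exact pow_le_one₀ (v.nonneg _) (hw.1 i)
  · obtain ⟨i0, hi0⟩ := hw.2
    refine ⟨i0, ?_⟩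
    have h1 : v (w i0 ^ q) = 1 := by rw [map_pow, hi0, one_pow]
    have := viso v hna (x := w i0 ^ q) (y := (p : AlgebraicClosure ℚ_[p]) * eval w (P i0))
      (by rw [h1]; exact hple i0)
    rw [Ft, this, h1]

theorem Ft_contract
    (hna : ∀ x y : AlgebraicClosure ℚ_[p], v (x + y) ≤ max (v x) (v y))
    (hv : ∀ a : ℚ_[p], v (algebraMap ℚ_[p] (AlgebraicClosure ℚ_[p]) a) = ‖a‖)
    {s : ℕ} (hs : 1 ≤ s)
    (P : Fin (N + 1) → MvPolynomial (Fin (N + 1)) (AlgebraicClosure ℚ_[p]))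
    (hPc : ∀ i m, v ((P i).coeff m) ≤ 1)
    {w u : Fin (N + 1) → AlgebraicClosure ℚ_[p]} (hw : IsUnitVec v w) (hu : IsUnitVec v u)
    {δ : ℝ} (hδ0 : 0 ≤ δ) (hδ1 : δ ≤ 1) (hd : ∀ i, v (w i - u i) ≤ δ) (i : Fin (N + 1)) :
    v (Ft (p ^ s) P w i - Ft (p ^ s) P u i)
      ≤ δ * max δ (v (p : AlgebraicClosure ℚ_[p])) := by
  have hvp0 : 0 ≤ v (p : AlgebraicClosure ℚ_[p]) := v.nonneg _
  have hrmax : 0 ≤ max δ (v (p : AlgebraicClosure ℚ_[p])) := le_trans hδ0 (le_max_left _ _)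
  have hq2 : 2 ≤ p ^ s := by
    calc 2 = 2 ^ 1 := rfl
    _ ≤ p ^ 1 := Nat.pow_le_pow_left (Fact.out : p.Prime).two_le 1
    _ ≤ p ^ s := Nat.pow_le_pow_right (Nat.le_of_lt (Fact.out : p.Prime).one_lt) hs
  have key : Ft (p ^ s) P w i - Ft (p ^ s) P u i
      = (w i ^ p ^ s - u i ^ p ^ s)
        + (p : AlgebraicClosure ℚ_[p]) * (eval w (P i) - eval u (P i)) := by
    simp only [Ft]; ring
  rw [key]
  refine le_trans (hna _ _) (max_le ?_ ?_)
  · refine le_trans (vfrob v hna hv hs (hw.1 i) (hu.1 i)) (max_le ?_ ?_)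
    · -- (v (w i - u i))^q ≤ δ * max δ vp
      calc v (w i - u i) ^ p ^ s ≤ δ ^ p ^ s :=
            pow_le_pow_left₀ (v.nonneg _) (hd i) _
        _ ≤ δ ^ 2 := pow_le_pow_of_le_one hδ0 hδ1 hq2
        _ = δ * δ := sq δ
        _ ≤ δ * max δ (v (p : AlgebraicClosure ℚ_[p])) :=
            mul_le_mul_of_nonneg_left (le_max_left _ _) hδ0
    · calc v (p : AlgebraicClosure ℚ_[p]) * v (w i - u i)
          ≤ v (p : AlgebraicClosure ℚ_[p]) * δ :=
            mul_le_mul_of_nonneg_left (hd i) hvp0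
        _ = δ * v (p : AlgebraicClosure ℚ_[p]) := mul_comm _ _
        _ ≤ δ * max δ (v (p : AlgebraicClosure ℚ_[p])) :=
            mul_le_mul_of_nonneg_left (le_max_right _ _) hδ0
  · rw [map_mul]
    calc v (p : AlgebraicClosure ℚ_[p]) * v (eval w (P i) - eval u (P i))
        ≤ v (p : AlgebraicClosure ℚ_[p]) * δ :=
          mul_le_mul_of_nonneg_left
            (veval_sub v hna (P i) (hPc i) w u hw.1 hu.1 hδ0 hd) hvp0
      _ = δ * v (p : AlgebraicClosure ℚ_[p]) := mul_comm _ _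
      _ ≤ δ * max δ (v (p : AlgebraicClosure ℚ_[p])) :=
          mul_le_mul_of_nonneg_left (le_max_right _ _) hδ0

theorem Ft_iter_unit
    (hna : ∀ x y : AlgebraicClosure ℚ_[p], v (x + y) ≤ max (v x) (v y))
    (hv : ∀ a : ℚ_[p], v (algebraMap ℚ_[p] (AlgebraicClosure ℚ_[p]) a) = ‖a‖)
    (q : ℕ) (hq : 1 ≤ q)
    (P : Fin (N + 1) → MvPolynomial (Fin (N + 1)) (AlgebraicClosure ℚ_[p]))
    (hPc : ∀ i m, v ((P i).coeff m) ≤ 1)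
    {w : Fin (N + 1) → AlgebraicClosure ℚ_[p]} (hw : IsUnitVec v w) :
    ∀ k, IsUnitVec v ((Ft q P)^[k] w) := by
  intro k
  induction k with
  | zero => simpa using hw
  | succ k ih =>
      rw [Function.iterate_succ_apply']
      exact unit_Ft v hna hv q hq P hPc ih

theorem Ft_iter_contract
    (hna : ∀ x y : AlgebraicClosure ℚ_[p], v (x + y) ≤ max (v x) (v y))
    (hv : ∀ a : ℚ_[p], v (algebraMap ℚ_[p] (AlgebraicClosure ℚ_[p]) a) = ‖a‖)
    {s : ℕ} (hs : 1 ≤ s)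
    (P : Fin (N + 1) → MvPolynomial (Fin (N + 1)) (AlgebraicClosure ℚ_[p]))
    (hPc : ∀ i m, v ((P i).coeff m) ≤ 1)
    {w u : Fin (N + 1) → AlgebraicClosure ℚ_[p]} (hw : IsUnitVec v w) (hu : IsUnitVec v u)
    {δ : ℝ} (hδ0 : 0 ≤ δ) (hδ1 : δ ≤ 1) (hd : ∀ i, v (w i - u i) ≤ δ) :
    ∀ k i, v ((Ft (p ^ s) P)^[k] w i - (Ft (p ^ s) P)^[k] u i)
      ≤ δ * (max δ (v (p : AlgebraicClosure ℚ_[p]))) ^ k := by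
  have hvp1 : v (p : AlgebraicClosure ℚ_[p]) < 1 := vp_lt_one v hv
  have hr0 : 0 ≤ max δ (v (p : AlgebraicClosure ℚ_[p])) := le_trans hδ0 (le_max_left _ _)
  have hr1 : max δ (v (p : AlgebraicClosure ℚ_[p])) ≤ 1 := max_le hδ1 hvp1.le
  have hq1 : 1 ≤ p ^ s := Nat.one_le_pow _ _ (Fact.out : p.Prime).pos
  intro k
  induction k with
  | zero => simpa using hd
  | succ k ih =>
      intro i
      rw [Function.iterate_succ_apply', Function.iterate_succ_apply']
      set r := max δ (v (p : AlgebraicClosure ℚ_[p])) with hrdef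
      have hδk0 : 0 ≤ δ * r ^ k := mul_nonneg hδ0 (pow_nonneg hr0 k)
      have hδk1 : δ * r ^ k ≤ 1 := by
        calc δ * r ^ k ≤ 1 * 1 :=
          mul_le_mul hδ1 (pow_le_one₀ hr0 hr1) (pow_nonneg hr0 k) zero_le_one
        _ = 1 := one_mul 1
      have hstep := Ft_contract v hna hv hs P hPc
        (Ft_iter_unit v hna hv (p ^ s) hq1 P hPc hw k)
        (Ft_iter_unit v hna hv (p ^ s) hq1 P hPc hu k) hδk0 hδk1 ih i
      refine le_trans hstep ?_
      have hδkδ : δ * r ^ k ≤ δ := by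
        calc δ * r ^ k ≤ δ * 1 :=
          mul_le_mul_of_nonneg_left (pow_le_one₀ hr0 hr1) hδ0
        _ = δ := mul_one δ
      calc δ * r ^ k * max (δ * r ^ k) (v (p : AlgebraicClosure ℚ_[p]))
          ≤ δ * r ^ k * r :=
            mul_le_mul_of_nonneg_left
              (max_le (le_trans hδkδ (le_max_left _ _)) (le_max_right _ _)) hδk0
        _ = δ * r ^ (k + 1) := by ring

theorem vσ_le
    (hna : ∀ x y : AlgebraicClosure ℚ_[p], v (x + y) ≤ max (v x) (v y))
    {s : ℕ} (σ : AlgebraicClosure ℚ_[p] ≃+* AlgebraicClosure ℚ_[p])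
    (hσF : ∀ x : AlgebraicClosure ℚ_[p], v x ≤ 1 → v (σ x - x ^ p ^ s) < 1)
    {z : AlgebraicClosure ℚ_[p]} (hz : v z ≤ 1) : v (σ z) ≤ 1 := by
  have : σ z = z ^ p ^ s + (σ z - z ^ p ^ s) := by ring
  rw [this]
  refine le_trans (hna _ _) (max_le ?_ (hσF z hz).le)
  rw [map_pow]
  exact pow_le_one₀ (v.nonneg _) hz

theorem vσ_one
    (hna : ∀ x y : AlgebraicClosure ℚ_[p], v (x + y) ≤ max (v x) (v y))
    {s : ℕ} (σ : AlgebraicClosure ℚ_[p] ≃+* AlgebraicClosure ℚ_[p])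
    (hσF : ∀ x : AlgebraicClosure ℚ_[p], v x ≤ 1 → v (σ x - x ^ p ^ s) < 1)
    {z : AlgebraicClosure ℚ_[p]} (hz : v z = 1) : v (σ z) = 1 := by
  have h1 : v (z ^ p ^ s) = 1 := by rw [map_pow, hz, one_pow]
  have : σ z = z ^ p ^ s + (σ z - z ^ p ^ s) := by ring
  rw [this, viso v hna (by rw [h1]; exact hσF z hz.le), h1]

theorem σ_ne_zero (σ : AlgebraicClosure ℚ_[p] ≃+* AlgebraicClosure ℚ_[p])
    {w : Fin (N + 1) → AlgebraicClosure ℚ_[p]} (hw : w ≠ 0) :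
    (fun i => σ (w i)) ≠ 0 := by
  intro h
  apply hw
  funext i
  have := congrFun h i
  simpa using this

theorem σ_eval (σ : AlgebraicClosure ℚ_[p] ≃+* AlgebraicClosure ℚ_[p])
    (hσQ : ∀ a : ℚ_[p], σ (algebraMap ℚ_[p] (AlgebraicClosure ℚ_[p]) a) =
      algebraMap ℚ_[p] (AlgebraicClosure ℚ_[p]) a)
    (P : MvPolynomial (Fin (N + 1)) (AlgebraicClosure ℚ_[p]))
    (hP : ∀ m, ∃ c : ℤ_[p],
      P.coeff m = algebraMap ℚ_[p] (AlgebraicClosure ℚ_[p]) (c : ℚ_[p]))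
    (w : Fin (N + 1) → AlgebraicClosure ℚ_[p]) :
    σ (eval w P) = eval (fun i => σ (w i)) P := by
  rw [eval_eq', eval_eq', map_sum]
  refine Finset.sum_congr rfl fun d _ => ?_
  rw [map_mul, map_prod]
  congr 1
  · obtain ⟨c, hc⟩ := hP d
    rw [hc, hσQ]
  · exact Finset.prod_congr rfl fun i _ => by rw [map_pow]

theorem σ_Ft (σ : AlgebraicClosure ℚ_[p] ≃+* AlgebraicClosure ℚ_[p])
    (hσQ : ∀ a : ℚ_[p], σ (algebraMap ℚ_[p] (AlgebraicClosure ℚ_[p]) a) =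
      algebraMap ℚ_[p] (AlgebraicClosure ℚ_[p]) a)
    (q : ℕ) (P : Fin (N + 1) → MvPolynomial (Fin (N + 1)) (AlgebraicClosure ℚ_[p]))
    (hPint : ∀ i m, ∃ c : ℤ_[p],
      (P i).coeff m = algebraMap ℚ_[p] (AlgebraicClosure ℚ_[p]) (c : ℚ_[p]))
    (w : Fin (N + 1) → AlgebraicClosure ℚ_[p]) :
    (fun i => σ (Ft q P w i)) = Ft q P (fun i => σ (w i)) := by
  funext i
  have hp' : σ ((p : ℕ) : AlgebraicClosure ℚ_[p]) = ((p : ℕ) : AlgebraicClosure ℚ_[p]) :=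
    map_natCast σ p
  simp only [Ft, map_add, map_mul, map_pow, hp', σ_eval σ hσQ (P i) (hPint i) w]

theorem mk_eq_of_minors {K : Type*} [Field K] {N : ℕ} {w u : Fin (N + 1) → K}
    (hw : w ≠ 0) (hu : u ≠ 0)
    (h : ∀ i j, w i * u j - w j * u i = 0) :
    Projectivization.mk K w hw = Projectivization.mk K u hu := by
  obtain ⟨j0, hj0⟩ : ∃ j, u j ≠ 0 := Function.ne_iff.mp hu
  have hkey : ∀ i, w i * u j0 = w j0 * u i := fun i => sub_eq_zero.mp (h i j0)
  have hw0 : w j0 ≠ 0 := by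
    intro hwj
    apply hw
    funext i
    have := hkey i
    rw [hwj, zero_mul] at this
    rcases mul_eq_zero.mp this with h1 | h2
    · exact h1
    · exact absurd h2 hj0
  rw [Projectivization.mk_eq_mk_iff']
  refine ⟨w j0 / u j0, funext fun i => ?_⟩
  show w j0 / u j0 * u i = w i
  field_simp
  linear_combination - hkey i

theorem unit_scalar {w u : Fin (N + 1) → AlgebraicClosure ℚ_[p]}
    (hw : IsUnitVec v w) (hu : IsUnitVec v u)
    (c : AlgebraicClosure ℚ_[p]) (hc : ∀ i, u i = c * w i) : v c = 1 := by
  obtain ⟨i1, hi1⟩ := hu.2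
  obtain ⟨i2, hi2⟩ := hw.2
  have h1 : 1 ≤ v c := by
    have := hi1
    rw [hc i1, map_mul] at this
    nlinarith [hw.1 i1, v.nonneg c, v.nonneg (w i1)]
  have h2 : v c ≤ 1 := by
    have := hu.1 i2
    rw [hc i2, map_mul, hi2, mul_one] at this
    exact this
  linarith

end

end MSAux
/-- **Lemma 4.7** (Medvedev–Scanlon). For a lift of Frobenius `F` on `ℙ^N` defined over `ℤ_p`
and a Galois lift `σ` of the `q`-power Frobenius, the periodic points of `F` are exactly the
points where `F` agrees with the coordinatewise action of `σ`. -/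
theorem periodic_eq_equalizer_of_galois_frobenius_lift
    {p : ℕ} [Fact p.Prime] (s : ℕ) (hs : 1 ≤ s) {N : ℕ}
    (v : AbsoluteValue (AlgebraicClosure ℚ_[p]) ℝ)
    (hna : ∀ x y : AlgebraicClosure ℚ_[p], v (x + y) ≤ max (v x) (v y))
    (hv : ∀ a : ℚ_[p], v (algebraMap ℚ_[p] (AlgebraicClosure ℚ_[p]) a) = ‖a‖)
    (P : Fin (N + 1) → MvPolynomial (Fin (N + 1)) (AlgebraicClosure ℚ_[p]))
    (hPhom : ∀ i, (P i).IsHomogeneous (p ^ s))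
    (hPint : ∀ i m, ∃ c : ℤ_[p],
      (P i).coeff m = algebraMap ℚ_[p] (AlgebraicClosure ℚ_[p]) (c : ℚ_[p]))
    (F : ℙ (AlgebraicClosure ℚ_[p]) (Fin (N + 1) → AlgebraicClosure ℚ_[p]) →
      ℙ (AlgebraicClosure ℚ_[p]) (Fin (N + 1) → AlgebraicClosure ℚ_[p]))
    (hFnz : ∀ w : Fin (N + 1) → AlgebraicClosure ℚ_[p], w ≠ 0 →
      (fun i => w i ^ p ^ s + (p : AlgebraicClosure ℚ_[p]) * MvPolynomial.eval w (P i)) ≠ 0)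
    (hF : ∀ (w : Fin (N + 1) → AlgebraicClosure ℚ_[p]) (hw : w ≠ 0),
      F (Projectivization.mk (AlgebraicClosure ℚ_[p]) w hw) =
        Projectivization.mk (AlgebraicClosure ℚ_[p])
          (fun i => w i ^ p ^ s + (p : AlgebraicClosure ℚ_[p]) * MvPolynomial.eval w (P i))
          (hFnz w hw))
    (Per : Set (ℙ (AlgebraicClosure ℚ_[p]) (Fin (N + 1) → AlgebraicClosure ℚ_[p])))
    (hPer : ∀ x, x ∈ Per ↔ ∃ n, 1 ≤ n ∧ F^[n] x = x)
    (σ : AlgebraicClosure ℚ_[p] ≃+* AlgebraicClosure ℚ_[p])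
    (hσQ : ∀ a : ℚ_[p], σ (algebraMap ℚ_[p] (AlgebraicClosure ℚ_[p]) a) =
      algebraMap ℚ_[p] (AlgebraicClosure ℚ_[p]) a)
    (hσF : ∀ x : AlgebraicClosure ℚ_[p], v x ≤ 1 → v (σ x - x ^ p ^ s) < 1)
    (σP : ℙ (AlgebraicClosure ℚ_[p]) (Fin (N + 1) → AlgebraicClosure ℚ_[p]) →
      ℙ (AlgebraicClosure ℚ_[p]) (Fin (N + 1) → AlgebraicClosure ℚ_[p]))
    (hσP : ∀ (w : Fin (N + 1) → AlgebraicClosure ℚ_[p]) (hw : w ≠ 0)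
      (hw' : (fun i => σ (w i)) ≠ 0),
      σP (Projectivization.mk (AlgebraicClosure ℚ_[p]) w hw) =
        Projectivization.mk (AlgebraicClosure ℚ_[p]) (fun i => σ (w i)) hw')
    :
    Per = {x | F x = σP x} := by
  classical
  have hq1 : 1 ≤ p ^ s := Nat.one_le_pow _ _ (Fact.out : p.Prime).pos
  have hPc : ∀ i m, v ((P i).coeff m) ≤ 1 := by
    intro i m
    obtain ⟨c, hc⟩ := hPint i m
    rw [hc, hv]
    have := c.norm_le_one
    rwa [PadicInt.norm_def] at this
  have hvp1 : v ((p : ℕ) : AlgebraicClosure ℚ_[p]) < 1 := MSAux.vp_lt_one v hv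
  have hvp0 : 0 ≤ v ((p : ℕ) : AlgebraicClosure ℚ_[p]) := v.nonneg _
  have hFt : ∀ (w : Fin (N + 1) → AlgebraicClosure ℚ_[p]) (hw : w ≠ 0),
      F (Projectivization.mk (AlgebraicClosure ℚ_[p]) w hw) =
        Projectivization.mk (AlgebraicClosure ℚ_[p]) (MSAux.Ft (p ^ s) P w) (hFnz w hw) := hF
  have hmkcongr : ∀ {w u : Fin (N + 1) → AlgebraicClosure ℚ_[p]} (_ : w = u)
      (hw : w ≠ 0) (hu : u ≠ 0),
      Projectivization.mk (AlgebraicClosure ℚ_[p]) w hw =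
        Projectivization.mk (AlgebraicClosure ℚ_[p]) u hu := by
    intro w u h hw hu
    subst h
    rfl
  -- commutation of `F` and `σP`
  have hcomm : ∀ x, F (σP x) = σP (F x) := by
    intro x
    conv_lhs => rw [← x.mk_rep]
    conv_rhs => rw [← x.mk_rep]
    have hw := x.rep_nonzero
    have h1 := hσP x.rep hw (MSAux.σ_ne_zero σ hw)
    have h2 := hFt (fun i => σ (x.rep i)) (MSAux.σ_ne_zero σ hw)
    have h3 := hFt x.rep hw
    have h4 := hσP (MSAux.Ft (p ^ s) P x.rep) (hFnz x.rep hw)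
      (MSAux.σ_ne_zero σ (hFnz x.rep hw))
    rw [h1, h2, h3, h4]
    exact (hmkcongr (MSAux.σ_Ft σ hσQ (p ^ s) P hPint x.rep) _ _).symm
  have hcommit : ∀ k x, F^[k] (σP x) = σP (F^[k] x) := by
    intro k
    induction k with
    | zero => intro x; rfl
    | succ k ih =>
        intro x
        rw [Function.iterate_succ_apply, hcomm x, ih (F x), ← Function.iterate_succ_apply]
  -- iterates of `F` on unit representatives
  have hmkiter : ∀ (w : Fin (N + 1) → AlgebraicClosure ℚ_[p])
      (hwu : MSAux.IsUnitVec v w) (k : ℕ),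
      F^[k] (Projectivization.mk (AlgebraicClosure ℚ_[p]) w (MSAux.unit_ne_zero v hwu)) =
        Projectivization.mk (AlgebraicClosure ℚ_[p]) ((MSAux.Ft (p ^ s) P)^[k] w)
          (MSAux.unit_ne_zero v (MSAux.Ft_iter_unit v hna hv (p ^ s) hq1 P hPc hwu k)) := by
    intro w hwu k
    induction k with
    | zero => rfl
    | succ k ih =>
        rw [Function.iterate_succ_apply', ih,
          hFt _ (MSAux.unit_ne_zero v (MSAux.Ft_iter_unit v hna hv (p ^ s) hq1 P hPc hwu k))]
        exact hmkcongr (Function.iterate_succ_apply' _ _ _).symm _ _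
  ext x
  rw [hPer x, Set.mem_setOf_eq]
  constructor
  · -- periodic points are in the equalizer (the hard direction)
    rintro ⟨n, hn1, hfix⟩
    obtain ⟨w, hw, hxw, hwu⟩ := MSAux.exists_unit_rep v x
    have hσwne := MSAux.σ_ne_zero σ hw
    have hσwu : MSAux.IsUnitVec v (fun i => σ (w i)) :=
      ⟨fun i => MSAux.vσ_le v hna σ hσF (hwu.1 i),
        by obtain ⟨i0, hi0⟩ := hwu.2; exact ⟨i0, MSAux.vσ_one v hna σ hσF hi0⟩⟩
    have hFtwu : MSAux.IsUnitVec v (MSAux.Ft (p ^ s) P w) :=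
      MSAux.unit_Ft v hna hv _ hq1 P hPc hwu
    set δ0 : ℝ := Finset.univ.sup' Finset.univ_nonempty
      (fun i => max (v (σ (w i) - w i ^ p ^ s)) (v ((p : ℕ) : AlgebraicClosure ℚ_[p])))
      with hδ0def
    have hδ0lt : δ0 < 1 := by
      rw [hδ0def, Finset.sup'_lt_iff]
      exact fun i _ => max_lt (hσF (w i) (hwu.1 i)) hvp1
    have hδ0p : v ((p : ℕ) : AlgebraicClosure ℚ_[p]) ≤ δ0 := by
      rw [hδ0def]
      exact le_trans (le_max_right _ _)
        (Finset.le_sup'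
          (fun i => max (v (σ (w i) - w i ^ p ^ s)) (v ((p : ℕ) : AlgebraicClosure ℚ_[p])))
          (Finset.mem_univ (0 : Fin (N + 1))))
    have hδ00 : 0 ≤ δ0 := le_trans hvp0 hδ0p
    have hδ01 : δ0 ≤ 1 := le_of_lt hδ0lt
    have hinit : ∀ i, v (MSAux.Ft (p ^ s) P w i - σ (w i)) ≤ δ0 := by
      intro i
      have hkey : MSAux.Ft (p ^ s) P w i - σ (w i)
          = (w i ^ p ^ s - σ (w i))
            + ((p : ℕ) : AlgebraicClosure ℚ_[p]) * MvPolynomial.eval w (P i) := by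
        simp only [MSAux.Ft]; ring
      rw [hkey]
      refine le_trans (hna _ _) (max_le ?_ ?_)
      · rw [v.map_sub]
        refine le_trans (le_max_left _ (v ((p : ℕ) : AlgebraicClosure ℚ_[p]))) ?_
        rw [hδ0def]
        exact Finset.le_sup'
          (fun i => max (v (σ (w i) - w i ^ p ^ s)) (v ((p : ℕ) : AlgebraicClosure ℚ_[p])))
          (Finset.mem_univ i)
      · rw [map_mul]
        calc v ((p : ℕ) : AlgebraicClosure ℚ_[p]) * v (MvPolynomial.eval w (P i))
            ≤ v ((p : ℕ) : AlgebraicClosure ℚ_[p]) * 1 :=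
              mul_le_mul_of_nonneg_left (MSAux.veval_le v hna (P i) (hPc i) w hwu.1) hvp0
          _ = v ((p : ℕ) : AlgebraicClosure ℚ_[p]) := mul_one _
          _ ≤ δ0 := hδ0p
    have hxFfix : F^[n] (F x) = F x := by
      rw [← Function.iterate_succ_apply, Function.iterate_succ_apply', hfix]
    have hyfix : F^[n] (σP x) = σP x := by rw [hcommit n x, hfix]
    have hmulfix : ∀ (z : ℙ (AlgebraicClosure ℚ_[p]) (Fin (N + 1) → AlgebraicClosure ℚ_[p]))
        (_ : F^[n] z = z) (k : ℕ), F^[n * k] z = z := by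
      intro z hz k
      rw [Function.iterate_mul]
      exact Function.iterate_fixed hz k
    have hcont := MSAux.Ft_iter_contract v hna hv hs P hPc hFtwu hσwu hδ00 hδ01 hinit
    rw [max_eq_left hδ0p] at hcont
    have hFxrep : F x = Projectivization.mk (AlgebraicClosure ℚ_[p])
        (MSAux.Ft (p ^ s) P w) (hFnz w hw) := by
      rw [hxw]; exact hFt w hw
    have hσxrep : σP x = Projectivization.mk (AlgebraicClosure ℚ_[p])
        (fun i => σ (w i)) hσwne := by
      rw [hxw]; exact hσP w hw hσwne
    have hminor : ∀ i j, MSAux.Ft (p ^ s) P w i * σ (w j)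
        - MSAux.Ft (p ^ s) P w j * σ (w i) = 0 := by
      intro i j
      have hle : v (MSAux.Ft (p ^ s) P w i * σ (w j)
          - MSAux.Ft (p ^ s) P w j * σ (w i)) ≤ 0 := by
        refine MSAux.le_zero_of_pow hδ00 hδ0lt (c := δ0) ?_
        intro k
        set wk := (MSAux.Ft (p ^ s) P)^[n * k] (MSAux.Ft (p ^ s) P w) with hwk
        set uk := (MSAux.Ft (p ^ s) P)^[n * k] (fun i => σ (w i)) with huk
        have hwku : MSAux.IsUnitVec v wk :=
          MSAux.Ft_iter_unit v hna hv _ hq1 P hPc hFtwu (n * k)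
        have huku : MSAux.IsUnitVec v uk :=
          MSAux.Ft_iter_unit v hna hv _ hq1 P hPc hσwu (n * k)
        have hmkwk : Projectivization.mk (AlgebraicClosure ℚ_[p]) wk
            (MSAux.unit_ne_zero v hwku) = F x := by
          have h6 := hmkiter (MSAux.Ft (p ^ s) P w) hFtwu (n * k)
          rw [← hFxrep] at h6
          rw [hmulfix _ hxFfix k] at h6
          exact h6.symm
        have hmkuk : Projectivization.mk (AlgebraicClosure ℚ_[p]) uk
            (MSAux.unit_ne_zero v huku) = σP x := by
          have h6 := hmkiter (fun i => σ (w i)) hσwu (n * k)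
          rw [← hσxrep] at h6
          rw [hmulfix _ hyfix k] at h6
          exact h6.symm
        obtain ⟨a, ha⟩ := (Projectivization.mk_eq_mk_iff _ _ _ _ _).mp
          (hmkwk.trans hFxrep)
        obtain ⟨b, hb⟩ := (Projectivization.mk_eq_mk_iff _ _ _ _ _).mp
          (hmkuk.trans hσxrep)
        have hai : ∀ i, wk i = (a : AlgebraicClosure ℚ_[p]) * MSAux.Ft (p ^ s) P w i := by
          intro i
          have := congrFun ha i
          simpa [Units.smul_def] using this.symm
        have hbi : ∀ i, uk i = (b : AlgebraicClosure ℚ_[p]) * σ (w i) := by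
          intro i
          have := congrFun hb i
          simpa [Units.smul_def] using this.symm
        have hva : v (a : AlgebraicClosure ℚ_[p]) = 1 :=
          MSAux.unit_scalar v hFtwu hwku _ hai
        have hvb : v (b : AlgebraicClosure ℚ_[p]) = 1 :=
          MSAux.unit_scalar v hσwu huku _ hbi
        have hminor_eq : v (MSAux.Ft (p ^ s) P w i * σ (w j)
            - MSAux.Ft (p ^ s) P w j * σ (w i)) = v (wk i * uk j - wk j * uk i) := by
          have hidd : wk i * uk j - wk j * uk i
              = ((a : AlgebraicClosure ℚ_[p]) * (b : AlgebraicClosure ℚ_[p]))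
                * (MSAux.Ft (p ^ s) P w i * σ (w j) - MSAux.Ft (p ^ s) P w j * σ (w i)) := by
            rw [hai i, hai j, hbi i, hbi j]; ring
          rw [hidd, map_mul, map_mul, hva, hvb, one_mul, one_mul]
        rw [hminor_eq]
        have hbound : v (wk i * uk j - wk j * uk i) ≤ δ0 * δ0 ^ (n * k) := by
          have h1 := hcont (n * k) i
          have h2 := hcont (n * k) j
          have hid : wk i * uk j - wk j * uk i
              = wk j * (wk i - uk i) - wk i * (wk j - uk j) := by ring
          rw [hid]
          refine le_trans (MSAux.vsub v hna _ _) (max_le ?_ ?_)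
          · rw [map_mul]
            calc v (wk j) * v (wk i - uk i) ≤ 1 * (δ0 * δ0 ^ (n * k)) :=
                  mul_le_mul (hwku.1 j) h1 (v.nonneg _) zero_le_one
              _ = δ0 * δ0 ^ (n * k) := one_mul _
          · rw [map_mul]
            calc v (wk i) * v (wk j - uk j) ≤ 1 * (δ0 * δ0 ^ (n * k)) :=
                  mul_le_mul (hwku.1 i) h2 (v.nonneg _) zero_le_one
              _ = δ0 * δ0 ^ (n * k) := one_mul _
        refine le_trans hbound ?_
        have hpow : δ0 ^ (n * k) ≤ δ0 ^ k :=
          pow_le_pow_of_le_one hδ00 hδ01 (Nat.le_mul_of_pos_left k hn1)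
        exact mul_le_mul_of_nonneg_left hpow hδ00
      have h0 : v (MSAux.Ft (p ^ s) P w i * σ (w j)
          - MSAux.Ft (p ^ s) P w j * σ (w i)) = 0 := le_antisymm hle (v.nonneg _)
      exact v.eq_zero.mp h0
    rw [hFxrep, hσxrep]
    exact MSAux.mk_eq_of_minors _ _ hminor
  · -- the equalizer consists of periodic points
    intro hx
    have hw : x.rep ≠ 0 := x.rep_nonzero
    set w := x.rep with hwdef
    -- `σ` preserves roots of polynomials over `ℚ_[p]`
    have hroot : ∀ (z : AlgebraicClosure ℚ_[p]) (q : Polynomial ℚ_[p]),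
        Polynomial.aeval z q = 0 → Polynomial.aeval (σ z) q = 0 := by
      intro z q hzq
      let σ' : AlgebraicClosure ℚ_[p] ≃ₐ[ℚ_[p]] AlgebraicClosure ℚ_[p] :=
        AlgEquiv.ofRingEquiv (f := σ) hσQ
      have : Polynomial.aeval (σ'.toAlgHom z) q = σ'.toAlgHom (Polynomial.aeval z q) :=
        Polynomial.aeval_algHom_apply σ'.toAlgHom z q
      rw [hzq, map_zero] at this
      exact this
    -- the `σ`-orbit of the coordinates of `x.rep` is finite
    have hgmem : ∀ k : ℕ, (fun i => (⇑σ)^[k] (w i)) ∈ Set.pi Set.univ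
        (fun i => (minpoly ℚ_[p] (w i)).rootSet (AlgebraicClosure ℚ_[p])) := by
      intro k
      induction k with
      | zero =>
          intro i _
          rw [Polynomial.mem_rootSet]
          exact ⟨minpoly.ne_zero (Algebra.IsIntegral.isIntegral (w i)), minpoly.aeval _ _⟩
      | succ k ih =>
          intro i _
          have hi := ih i (Set.mem_univ i)
          rw [Polynomial.mem_rootSet] at hi ⊢
          refine ⟨hi.1, ?_⟩
          show Polynomial.aeval ((⇑σ)^[k + 1] (w i)) (minpoly ℚ_[p] (w i)) = 0
          rw [Function.iterate_succ_apply']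
          exact hroot _ _ hi.2
    have hfin : (Set.pi Set.univ
        (fun i => (minpoly ℚ_[p] (w i)).rootSet (AlgebraicClosure ℚ_[p]))).Finite :=
      Set.Finite.pi (fun i => Polynomial.rootSet_finite _ _)
    obtain ⟨k, -, l, -, hkl, hgkl⟩ :=
      Set.infinite_univ.exists_ne_map_eq_of_mapsTo
        (f := fun k : ℕ => fun i => (⇑σ)^[k] (w i)) (fun k _ => hgmem k) hfin
    have key : ∀ k l : ℕ, k < l → (fun i => (⇑σ)^[k] (w i)) = (fun i => (⇑σ)^[l] (w i)) →
        ∃ n : ℕ, 1 ≤ n ∧ (fun i => (⇑σ)^[n] (w i)) = w := by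
      intro k l hlt he
      refine ⟨l - k, by omega, funext fun i => ?_⟩
      have h1 : (⇑σ)^[k] (w i) = (⇑σ)^[l] (w i) := congrFun he i
      have h2 : (⇑σ)^[l] (w i) = (⇑σ)^[k] ((⇑σ)^[l - k] (w i)) := by
        rw [← Function.iterate_add_apply]
        congr 1
        omega
      rw [h2] at h1
      exact ((σ.injective.iterate k) h1).symm
    obtain ⟨n, hn1, hσn⟩ : ∃ n : ℕ, 1 ≤ n ∧ (fun i => (⇑σ)^[n] (w i)) = w := by
      rcases Nat.lt_or_ge k l with h | h
      · exact key k l h hgkl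
      · exact key l k (by omega) hgkl.symm
    -- iterates of `σP` on `x`
    have hσiterne : ∀ m : ℕ, (fun i => (⇑σ)^[m] (w i)) ≠ 0 := by
      intro m h
      apply hw
      funext i
      have h1 := congrFun h i
      have h2 : (⇑σ)^[m] (0 : AlgebraicClosure ℚ_[p]) = 0 :=
        Function.iterate_fixed (map_zero σ) m
      refine (σ.injective.iterate m) ?_
      show (⇑σ)^[m] (w i) = (⇑σ)^[m] 0
      rw [h2]
      exact h1
    have hσPiter : ∀ m : ℕ, σP^[m] x = Projectivization.mk (AlgebraicClosure ℚ_[p])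
        (fun i => (⇑σ)^[m] (w i)) (hσiterne m) := by
      intro m
      induction m with
      | zero =>
          have : x = Projectivization.mk (AlgebraicClosure ℚ_[p]) w hw := (x.mk_rep).symm
          rw [Function.iterate_zero_apply, this]
          exact hmkcongr (funext fun i => rfl) _ _
      | succ m ih =>
          rw [Function.iterate_succ_apply', ih,
            hσP _ (hσiterne m) (MSAux.σ_ne_zero σ (hσiterne m))]
          exact hmkcongr (funext fun i => (Function.iterate_succ_apply' _ _ _).symm) _ _
    have hFiter : ∀ m : ℕ, F^[m] x = σP^[m] x := by
      intro m
      induction m with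
      | zero => rfl
      | succ m ih =>
          rw [Function.iterate_succ_apply, hx, hcommit m x, ih,
            ← Function.iterate_succ_apply' σP m x]
    refine ⟨n, hn1, ?_⟩
    rw [hFiter n, hσPiter n, hmkcongr hσn (hσiterne n) hw]
    exact x.mk_rep
end
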